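/- arXiv:2503.16700 — 6 statements merged into one kernel-verified Lean document; each statement's English description precedes it below -/
import Mathlib

section
/- Suppose β > 0, ε > 0, and Q₁, Q₂ : S×A → ℝ satisfy L₁(Q₁) ≤ ε and L₂(Q₂) ≤ ε, where L₁, L₂ are the AGT2 expected loss functions. Then ‖Q₁ − Q*‖∞ ≤ √(ε·|S|·|A|)/(1−γ) + (γ/(1−γ))·√(2ε·|S|·|A|/β). -/
open Finset

/-- Maximum of `Q s' a'` over actions `a'`. -/
noncomputable def maxQ {S A : Type*} [Fintype A] [Nonempty A]
    (Q : S → A → ℝ) (s' : S) : ℝ :=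
  univ.sup' univ_nonempty (fun a' => Q s' a')

/-- The Bellman optimality operator. -/
noncomputable def bellmanT {S A : Type*} [Fintype S] [Fintype A] [Nonempty A]
    (P r : S → A → S → ℝ) (γ : ℝ) (Q : S → A → ℝ) : S → A → ℝ :=
  fun s a => ∑ s', P s a s' * (r s a s' + γ * maxQ Q s')

/-- Sup norm on `ℝ^{S×A}`. -/
noncomputable def supNorm {S A : Type*} [Fintype S] [Fintype A] [Nonempty S] [Nonempty A]
    (Q : S → A → ℝ) : ℝ :=
  univ.sup' univ_nonempty (fun p : S × A => |Q p.1 p.2|)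

/-- AGT2 expected loss `L₁`. -/
noncomputable def agt2L1 {S A : Type*} [Fintype S] [Fintype A] [Nonempty A]
    (P r : S → A → S → ℝ) (γ : ℝ) (Q₁ Q₂ : S → A → ℝ) : ℝ :=
  (1 / ((Fintype.card S : ℝ) * (Fintype.card A : ℝ))) *
    ∑ p : S × A, ∑ s', P p.1 p.2 s' *
      (r p.1 p.2 s' + γ * maxQ Q₂ s' - Q₁ p.1 p.2) ^ 2

/-- AGT2 expected loss `L₂`. -/
noncomputable def agt2L2 {S A : Type*} [Fintype S] [Fintype A]
    (β : ℝ) (Q₁ Q₂ : S → A → ℝ) : ℝ :=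
  (1 / ((Fintype.card S : ℝ) * (Fintype.card A : ℝ))) *
    ∑ p : S × A, (β / 2) * (Q₁ p.1 p.2 - Q₂ p.1 p.2) ^ 2

lemma abs_maxQ_sub_maxQ_le {S A : Type*} [Fintype S] [Fintype A] [Nonempty S] [Nonempty A]
    (Q Q' : S → A → ℝ) (s' : S) :
    |maxQ Q s' - maxQ Q' s'| ≤ supNorm (fun s a => Q s a - Q' s a) := by
  set D := supNorm (fun s a => Q s a - Q' s a) with hD
  have key : ∀ (F G : S → A → ℝ), (∀ s a, |F s a - G s a| ≤ D) →
      maxQ F s' - maxQ G s' ≤ D := by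
    intro F G h
    have : maxQ F s' ≤ maxQ G s' + D := by
      apply Finset.sup'_le
      intro a _
      have h1 := h s' a
      have h2 : G s' a ≤ maxQ G s' := Finset.le_sup' (fun a' => G s' a') (mem_univ a)
      have := abs_le.mp h1
      linarith [this.2]
    linarith
  have hb : ∀ s a, |Q s a - Q' s a| ≤ D :=
    fun s a => Finset.le_sup' (fun p : S × A => |Q p.1 p.2 - Q' p.1 p.2|) (mem_univ (s, a))
  have hb' : ∀ s a, |Q' s a - Q s a| ≤ D := by
    intro s a; rw [abs_sub_comm]; exact hb s a
  rw [abs_sub_le_iff]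
  exact ⟨key Q Q' hb, key Q' Q hb'⟩

theorem agt2_dqn_optimality_Q1 {S A : Type*} [Fintype S] [Fintype A] [Nonempty S] [Nonempty A]
    (P r : S → A → S → ℝ) (γ : ℝ) (hγ0 : 0 ≤ γ) (hγ1 : γ < 1)
    (hP0 : ∀ s a s', 0 ≤ P s a s') (hP1 : ∀ s a, ∑ s', P s a s' = 1)
    (Qstar : S → A → ℝ) (hQstar : bellmanT P r γ Qstar = Qstar)
    (β ε : ℝ) (hβ : 0 < β) (hε : 0 < ε)
    (Q₁ Q₂ : S → A → ℝ)
    (hL1 : agt2L1 P r γ Q₁ Q₂ ≤ ε)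
    (hL2 : agt2L2 β Q₁ Q₂ ≤ ε) :
    supNorm (fun s a => Q₁ s a - Qstar s a) ≤
      Real.sqrt (ε * (Fintype.card S : ℝ) * (Fintype.card A : ℝ)) / (1 - γ) +
        γ / (1 - γ) *
          Real.sqrt (2 * ε * (Fintype.card S : ℝ) * (Fintype.card A : ℝ) / β) := by
  have hcS : (0 : ℝ) < (Fintype.card S : ℝ) := by
    exact_mod_cast Fintype.card_pos
  have hcA : (0 : ℝ) < (Fintype.card A : ℝ) := by
    exact_mod_cast Fintype.card_pos
  set cS := (Fintype.card S : ℝ)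
  set cA := (Fintype.card A : ℝ)
  have hN : (0 : ℝ) < cS * cA := mul_pos hcS hcA
  have hγ' : (0 : ℝ) < 1 - γ := by linarith
  -- Step A: each inner sum of L1 is ≤ ε * N
  have hsum1 : ∑ p : S × A, ∑ s', P p.1 p.2 s' *
      (r p.1 p.2 s' + γ * maxQ Q₂ s' - Q₁ p.1 p.2) ^ 2 ≤ ε * (cS * cA) := by
    rw [agt2L1, one_div, inv_mul_le_iff₀ hN] at hL1
    linarith [hL1]
  have hA : ∀ s a, ∑ s', P s a s' *
      (r s a s' + γ * maxQ Q₂ s' - Q₁ s a) ^ 2 ≤ ε * (cS * cA) := by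
    intro s a
    refine le_trans ?_ hsum1
    have := Finset.single_le_sum
      (f := fun p : S × A => ∑ s', P p.1 p.2 s' *
        (r p.1 p.2 s' + γ * maxQ Q₂ s' - Q₁ p.1 p.2) ^ 2)
      (fun p _ => Finset.sum_nonneg fun s' _ =>
        mul_nonneg (hP0 p.1 p.2 s') (sq_nonneg _)) (mem_univ (s, a))
    exact this
  -- Step B: |T Q₂ - Q₁| ≤ sqrt (ε N) pointwise
  have hB : ∀ s a, |bellmanT P r γ Q₂ s a - Q₁ s a| ≤ Real.sqrt (ε * (cS * cA)) := by
    intro s a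
    have hrw : bellmanT P r γ Q₂ s a - Q₁ s a
        = ∑ s', P s a s' * (r s a s' + γ * maxQ Q₂ s' - Q₁ s a) := by
      simp only [bellmanT, mul_sub, Finset.sum_sub_distrib, ← Finset.sum_mul, hP1, one_mul]
    rw [hrw]
    apply Real.abs_le_sqrt
    have hcs := Finset.sum_mul_sq_le_sq_mul_sq univ
      (fun s' => Real.sqrt (P s a s'))
      (fun s' => Real.sqrt (P s a s') * (r s a s' + γ * maxQ Q₂ s' - Q₁ s a))
    have e1 : ∀ s', Real.sqrt (P s a s') *
        (Real.sqrt (P s a s') * (r s a s' + γ * maxQ Q₂ s' - Q₁ s a))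
        = P s a s' * (r s a s' + γ * maxQ Q₂ s' - Q₁ s a) := by
      intro s'
      rw [← mul_assoc, Real.mul_self_sqrt (hP0 s a s')]
    have e2 : ∀ s', (Real.sqrt (P s a s')) ^ 2 = P s a s' := fun s' =>
      Real.sq_sqrt (hP0 s a s')
    have e3 : ∀ s', (Real.sqrt (P s a s') * (r s a s' + γ * maxQ Q₂ s' - Q₁ s a)) ^ 2
        = P s a s' * (r s a s' + γ * maxQ Q₂ s' - Q₁ s a) ^ 2 := by
      intro s'
      rw [mul_pow, e2]
    simp only [e1, e2, e3, hP1, one_mul] at hcs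
    exact le_trans hcs (hA s a)
  -- Step C: |Q₁ - Q₂| ≤ sqrt (2 ε N / β) pointwise
  have hC : ∀ s a, |Q₁ s a - Q₂ s a| ≤ Real.sqrt (2 * ε * (cS * cA) / β) := by
    intro s a
    apply Real.abs_le_sqrt
    have hsum2 : ∑ p : S × A, (β / 2) * (Q₁ p.1 p.2 - Q₂ p.1 p.2) ^ 2 ≤ ε * (cS * cA) := by
      rw [agt2L2, one_div, inv_mul_le_iff₀ hN] at hL2
      linarith [hL2]
    have hterm : (β / 2) * (Q₁ s a - Q₂ s a) ^ 2 ≤ ε * (cS * cA) := by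
      refine le_trans ?_ hsum2
      exact Finset.single_le_sum
        (f := fun p : S × A => (β / 2) * (Q₁ p.1 p.2 - Q₂ p.1 p.2) ^ 2)
        (fun p _ => mul_nonneg (by positivity) (sq_nonneg _)) (mem_univ (s, a))
    rw [le_div_iff₀ hβ]
    nlinarith [hterm]
  -- Step D: contraction
  have hD : ∀ s a, |bellmanT P r γ Q₂ s a - bellmanT P r γ Qstar s a| ≤
      γ * supNorm (fun s a => Q₂ s a - Qstar s a) := by
    intro s a
    set D := supNorm (fun s a => Q₂ s a - Qstar s a) with hDdef
    have hrw : bellmanT P r γ Q₂ s a - bellmanT P r γ Qstar s a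
        = ∑ s', P s a s' * (γ * (maxQ Q₂ s' - maxQ Qstar s')) := by
      simp only [bellmanT, ← Finset.sum_sub_distrib]
      apply Finset.sum_congr rfl
      intro s' _
      ring
    rw [hrw]
    calc |∑ s', P s a s' * (γ * (maxQ Q₂ s' - maxQ Qstar s'))|
        ≤ ∑ s', |P s a s' * (γ * (maxQ Q₂ s' - maxQ Qstar s'))| :=
          Finset.abs_sum_le_sum_abs _ _
      _ ≤ ∑ s', P s a s' * (γ * D) := by
          apply Finset.sum_le_sum
          intro s' _
          rw [abs_mul, abs_mul, abs_of_nonneg (hP0 s a s'), abs_of_nonneg hγ0]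
          have := abs_maxQ_sub_maxQ_le Q₂ Qstar s'
          have h1 : γ * |maxQ Q₂ s' - maxQ Qstar s'| ≤ γ * D :=
            mul_le_mul_of_nonneg_left this hγ0
          exact mul_le_mul_of_nonneg_left h1 (hP0 s a s')
      _ = γ * D := by rw [← Finset.sum_mul, hP1, one_mul]
  -- Step E: combine
  set x := supNorm (fun s a => Q₁ s a - Qstar s a) with hxdef
  set D := supNorm (fun s a => Q₂ s a - Qstar s a) with hDdef
  set a1 := Real.sqrt (ε * (cS * cA)) with ha1
  set b1 := Real.sqrt (2 * ε * (cS * cA) / β) with hb1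
  have hx : x ≤ a1 + γ * D := by
    apply Finset.sup'_le
    rintro ⟨s, a⟩ -
    have h1 := hB s a
    have h2 := hD s a
    have hfix : bellmanT P r γ Qstar s a = Qstar s a := by rw [hQstar]
    rw [hfix] at h2
    calc |Q₁ s a - Qstar s a|
        ≤ |Q₁ s a - bellmanT P r γ Q₂ s a| + |bellmanT P r γ Q₂ s a - Qstar s a| :=
          abs_sub_le _ _ _
      _ ≤ a1 + γ * D := by
          rw [abs_sub_comm] at h1
          linarith
  have hDx : D ≤ b1 + x := by
    apply Finset.sup'_le
    rintro ⟨s, a⟩ -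
    have h1 := hC s a
    have h2 : |Q₁ s a - Qstar s a| ≤ x :=
      Finset.le_sup' (fun p : S × A => |Q₁ p.1 p.2 - Qstar p.1 p.2|) (mem_univ (s, a))
    calc |Q₂ s a - Qstar s a|
        ≤ |Q₂ s a - Q₁ s a| + |Q₁ s a - Qstar s a| := abs_sub_le _ _ _
      _ ≤ b1 + x := by rw [abs_sub_comm] at h1; linarith
  have hfin : x * (1 - γ) ≤ a1 + γ * b1 := by
    have h3 : γ * D ≤ γ * (b1 + x) := mul_le_mul_of_nonneg_left hDx hγ0
    nlinarith [hx, h3]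
  have harg1 : ε * cS * cA = ε * (cS * cA) := by ring
  have harg2 : 2 * ε * cS * cA / β = 2 * ε * (cS * cA) / β := by ring
  rw [harg1, harg2, ← ha1, ← hb1]
  have heq : a1 / (1 - γ) + γ / (1 - γ) * b1 = (a1 + γ * b1) / (1 - γ) := by
    field_simp
  rw [heq, le_div_iff₀ hγ']
  exact hfin
end

section
/- Suppose ε > 0, β > 0, and Q₁, Q₂ : S×A → ℝ satisfy L₁(Q₁) ≤ ε, where L₁ is the AGT2 expected loss. Then for every (s,a) ∈ S×A, |(TQ₂)(s,a) − Q₁(s,a)| ≤ √(ε·|S|·|A|). -/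
open Finset

theorem agt2_L1_small_implies_bellman_close
    {S A : Type*} [Fintype S] [Fintype A] [Nonempty S] [Nonempty A]
    (P r : S → A → S → ℝ) (γ : ℝ) (hγ0 : 0 ≤ γ) (hγ1 : γ < 1)
    (hP0 : ∀ s a s', 0 ≤ P s a s') (hP1 : ∀ s a, ∑ s', P s a s' = 1)
    (β ε : ℝ) (hβ : 0 < β) (hε : 0 < ε)
    (Q₁ Q₂ : S → A → ℝ)
    (hL1 : agt2L1 P r γ Q₁ Q₂ ≤ ε) :
    ∀ s a, |bellmanT P r γ Q₂ s a - Q₁ s a| ≤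
      Real.sqrt (ε * (Fintype.card S : ℝ) * (Fintype.card A : ℝ)) := by
  intro s a
  set cS : ℝ := (Fintype.card S : ℝ) with hcSdef
  set cA : ℝ := (Fintype.card A : ℝ) with hcAdef
  have hcS : 0 < cS := by rw [hcSdef]; exact_mod_cast Fintype.card_pos
  have hcA : 0 < cA := by rw [hcAdef]; exact_mod_cast Fintype.card_pos
  have hsum : ∑ p : S × A, ∑ s', P p.1 p.2 s' *
      (r p.1 p.2 s' + γ * maxQ Q₂ s' - Q₁ p.1 p.2) ^ 2 ≤ ε * cS * cA := by
    have h := hL1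
    unfold agt2L1 at h
    rw [one_div, inv_mul_le_iff₀ (by positivity)] at h
    calc _ ≤ cS * cA * ε := h
    _ = ε * cS * cA := by ring
  have hterm : ∀ p : S × A, 0 ≤ ∑ s', P p.1 p.2 s' *
      (r p.1 p.2 s' + γ * maxQ Q₂ s' - Q₁ p.1 p.2) ^ 2 := fun p =>
    Finset.sum_nonneg fun s' _ => mul_nonneg (hP0 _ _ _) (sq_nonneg _)
  have hsa : ∑ s', P s a s' * (r s a s' + γ * maxQ Q₂ s' - Q₁ s a) ^ 2 ≤ ε * cS * cA :=
    le_trans (Finset.single_le_sum (f := fun p : S × A => ∑ s', P p.1 p.2 s' *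
      (r p.1 p.2 s' + γ * maxQ Q₂ s' - Q₁ p.1 p.2) ^ 2)
      (fun p _ => hterm p) (Finset.mem_univ (s, a))) hsum
  have hdiff : bellmanT P r γ Q₂ s a - Q₁ s a
      = ∑ s', P s a s' * (r s a s' + γ * maxQ Q₂ s' - Q₁ s a) := by
    have : bellmanT P r γ Q₂ s a - Q₁ s a
        = (∑ s', P s a s' * (r s a s' + γ * maxQ Q₂ s')) - (∑ s', P s a s') * Q₁ s a := by
      rw [hP1, one_mul]; rfl
    rw [this, Finset.sum_mul, ← Finset.sum_sub_distrib]
    exact Finset.sum_congr rfl fun s' _ => by ring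
  have hcs : (∑ s', P s a s' * (r s a s' + γ * maxQ Q₂ s' - Q₁ s a)) ^ 2
      ≤ ∑ s', P s a s' * (r s a s' + γ * maxQ Q₂ s' - Q₁ s a) ^ 2 := by
    have h2 := Finset.sum_sq_le_sum_mul_sum_of_sq_eq_mul Finset.univ
      (r := fun s' => P s a s' * (r s a s' + γ * maxQ Q₂ s' - Q₁ s a))
      (f := fun s' => P s a s')
      (g := fun s' => P s a s' * (r s a s' + γ * maxQ Q₂ s' - Q₁ s a) ^ 2)
      (fun i _ => hP0 s a i)
      (fun i _ => mul_nonneg (hP0 s a i) (sq_nonneg _))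
      (fun i _ => by ring)
    simpa [hP1 s a] using h2
  rw [hdiff, ← Real.sqrt_sq_eq_abs]
  exact Real.sqrt_le_sqrt (hcs.trans hsa)
end

section
/- Vector comparison principle: let F̄, F : ℝⁿ → ℝⁿ be globally Lipschitz continuous, with F̄ quasi-monotone increasing and F(v) ≤ F̄(v) componentwise for every v ∈ ℝⁿ. Let x, v : [0,∞) → ℝⁿ be differentiable curves satisfying x'(t) = F̄(x(t)) and v'(t) = F(v(t)) for all t ≥ 0, with v(0) < x(0) componentwise (strict inequality in every coordinate). Then v(t) ≤ x(t) componentwise for all t ≥ 0. -/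
open Filter Topology

/-- A map `F : ℝⁿ → ℝⁿ` is quasi-monotone increasing if for every index `i` and all
`x, y` with `x i = y i` and `x j ≤ y j` for all `j ≠ i`, one has `F x i ≤ F y i`. -/
def QuasiMonotone {n : ℕ} (F : (Fin n → ℝ) → Fin n → ℝ) : Prop :=
  ∀ (i : Fin n) (x y : Fin n → ℝ), x i = y i → (∀ j, j ≠ i → x j ≤ y j) → F x i ≤ F y i

theorem vector_comparison_principle {n : ℕ}
    (Fbar F : (Fin n → ℝ) → Fin n → ℝ)
    (K₁ K₂ : NNReal) (hFbarLip : LipschitzWith K₁ Fbar) (hFLip : LipschitzWith K₂ F)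
    (hquasi : QuasiMonotone Fbar)
    (hdom : ∀ v : Fin n → ℝ, ∀ i, F v i ≤ Fbar v i)
    (x v : ℝ → Fin n → ℝ)
    (hx : ∀ t : ℝ, 0 ≤ t → HasDerivAt x (Fbar (x t)) t)
    (hv : ∀ t : ℝ, 0 ≤ t → HasDerivAt v (F (v t)) t)
    (h0 : ∀ i, v 0 i < x 0 i) :
    ∀ t : ℝ, 0 ≤ t → ∀ i, v t i ≤ x t i := by
  set L : ℝ := (K₁ : ℝ) + 1 with hL
  -- the key estimate with an ε-margin
  have key : ∀ ε : ℝ, 0 < ε → ∀ t : ℝ, 0 ≤ t → ∀ i,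
      v t i < x t i + ε * Real.exp (L * t) := by
    intro ε hε
    set g : Fin n → ℝ → ℝ := fun i t => x t i + ε * Real.exp (L * t) - v t i with hg
    -- derivative of each component
    have hgderiv : ∀ t : ℝ, 0 ≤ t → ∀ i, HasDerivAt (g i)
        (Fbar (x t) i + ε * (Real.exp (L * t) * L) - F (v t) i) t := by
      intro t ht i
      have h1 : HasDerivAt (fun s => x s i) (Fbar (x t) i) t :=
        hasDerivAt_pi.1 (hx t ht) i
      have h2 : HasDerivAt (fun s => v s i) (F (v t) i) t :=
        hasDerivAt_pi.1 (hv t ht) i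
      have h3 : HasDerivAt (fun s : ℝ => L * s) L t := by
        simpa using (hasDerivAt_id t).const_mul L
      have h4 : HasDerivAt (fun s : ℝ => ε * Real.exp (L * s))
          (ε * (Real.exp (L * t) * L)) t := (h3.exp).const_mul ε
      exact (h1.add h4).sub h2
    by_contra hcon
    push_neg at hcon
    obtain ⟨t₀, ht₀, i₀, hi₀⟩ := hcon
    set S : Set ℝ := {t : ℝ | 0 ≤ t ∧ ∃ i, g i t ≤ 0} with hS
    have hS_ne : S.Nonempty := ⟨t₀, ht₀, i₀, by simp [hg]; linarith⟩
    have hS_bdd : BddBelow S := ⟨0, fun t ht => ht.1⟩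
    set τ : ℝ := sInf S with hτ
    have hτ0 : 0 ≤ τ := le_csInf hS_ne fun t ht => ht.1
    have hτcl : τ ∈ closure S := csInf_mem_closure hS_ne hS_bdd
    have hne : NeBot (𝓝[S] τ) := mem_closure_iff_nhdsWithin_neBot.1 hτcl
    have hgcont : ∀ i, ContinuousAt (g i) τ := fun i => (hgderiv τ hτ0 i).continuousAt
    -- τ ∈ S
    have hτS : ∃ i, g i τ ≤ 0 := by
      by_contra hno
      push_neg at hno
      have hev : ∀ᶠ s in 𝓝 τ, ∀ i, 0 < g i s := by
        rw [eventually_all]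
        exact fun i => (hgcont i).eventually (eventually_gt_nhds (hno i))
      have hev' : ∀ᶠ s in 𝓝[S] τ, ∀ i, 0 < g i s := hev.filter_mono nhdsWithin_le_nhds
      have hmem : ∀ᶠ s in 𝓝[S] τ, s ∈ S := eventually_mem_nhdsWithin
      obtain ⟨s, hs1, hs2⟩ := (hev'.and hmem).exists
      obtain ⟨_, j, hj⟩ := hs2
      exact absurd hj (not_le.2 (hs1 j))
    -- positivity at 0, hence τ > 0
    have hg0 : ∀ j, 0 < g j 0 := by
      intro j
      have := h0 j
      simp only [hg, mul_zero, Real.exp_zero, mul_one]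
      linarith
    have hτpos : 0 < τ := by
      rcases hτ0.lt_or_eq with h | h
      · exact h
      · obtain ⟨i, hi⟩ := hτS
        rw [← h] at hi
        exact absurd hi (not_le.2 (hg0 i))
    -- strictly before τ all components are positive
    have hbefore : ∀ s, 0 ≤ s → s < τ → ∀ j, 0 < g j s := by
      intro s hs hsτ j
      have hns : s ∉ S := notMem_of_lt_csInf hsτ hS_bdd
      by_contra hc
      exact hns ⟨hs, j, le_of_not_gt hc⟩
    -- left filter
    have hIio : NeBot (𝓝[Set.Iio τ] τ) := inferInstance
    have hevpos : ∀ᶠ s in 𝓝[Set.Iio τ] τ, 0 < s ∧ s < τ := by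
      filter_upwards [eventually_nhdsWithin_of_eventually_nhds (eventually_gt_nhds hτpos),
        eventually_mem_nhdsWithin] with s h1 h2
      exact ⟨h1, h2⟩
    -- g j τ ≥ 0 for all j by left continuity
    have hge : ∀ j, 0 ≤ g j τ := by
      intro j
      have htd : Tendsto (g j) (𝓝[Set.Iio τ] τ) (𝓝 (g j τ)) :=
        (hgcont j).continuousWithinAt.tendsto
      refine ge_of_tendsto htd ?_
      filter_upwards [hevpos] with s hs
      exact (hbefore s hs.1.le hs.2 j).le
    obtain ⟨i, hgi⟩ := hτS
    have heq : g i τ = 0 := le_antisymm hgi (hge i)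
    set e : ℝ := Real.exp (L * τ) with he
    have hepos : 0 < e := Real.exp_pos _
    set w : Fin n → ℝ := fun j => x τ j + ε * e with hw
    have hvwi : v τ i = w i := by
      have : x τ i + ε * e - v τ i = 0 := heq
      simp [hw]; linarith
    have hvwle : ∀ j, j ≠ i → v τ j ≤ w j := by
      intro j _
      have := hge j
      simp only [hg] at this
      simp [hw]; linarith
    have hq : Fbar (v τ) i ≤ Fbar w i := hquasi i (v τ) w hvwi hvwle
    -- Lipschitz estimate
    have hlip : Fbar w i ≤ Fbar (x τ) i + (K₁ : ℝ) * (ε * e) := by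
      have hd1 : dist w (x τ) ≤ ε * e := by
        rw [dist_pi_le_iff (by positivity)]
        intro j
        simp [hw, Real.dist_eq, abs_of_pos hε, abs_of_pos hepos, (mul_pos hε hepos).le]
      have hd2 : dist (Fbar w) (Fbar (x τ)) ≤ (K₁ : ℝ) * (ε * e) := by
        calc dist (Fbar w) (Fbar (x τ)) ≤ (K₁ : ℝ) * dist w (x τ) := hFbarLip.dist_le_mul _ _
          _ ≤ (K₁ : ℝ) * (ε * e) := by
              exact mul_le_mul_of_nonneg_left hd1 K₁.coe_nonneg
      have hd3 : dist (Fbar w i) (Fbar (x τ) i) ≤ dist (Fbar w) (Fbar (x τ)) :=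
        dist_le_pi_dist _ _ i
      have h4 : |Fbar w i - Fbar (x τ) i| ≤ (K₁ : ℝ) * (ε * e) := by
        rw [← Real.dist_eq]; linarith
      linarith [(abs_le.1 h4).2]
    -- the derivative of g i at τ is strictly positive
    set d : ℝ := Fbar (x τ) i + ε * (e * L) - F (v τ) i with hd
    have hdpos : 0 < d := by
      have h1 : F (v τ) i ≤ Fbar (v τ) i := hdom _ i
      have h2 : ε * (e * L) = (K₁ : ℝ) * (ε * e) + ε * e := by rw [hL]; ring
      have : 0 < ε * e := by positivity
      simp only [hd]
      linarith
    have hderτ : HasDerivAt (g i) d τ := hgderiv τ hτ0 i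
    -- slope contradiction
    have hslope : Tendsto (slope (g i) τ) (𝓝[≠] τ) (𝓝 d) :=
      hasDerivAt_iff_tendsto_slope.1 hderτ
    have hslope' : Tendsto (slope (g i) τ) (𝓝[Set.Iio τ] τ) (𝓝 d) :=
      hslope.mono_left (nhdsWithin_mono _ (fun s hs => ne_of_lt hs))
    have hevsl : ∀ᶠ s in 𝓝[Set.Iio τ] τ, 0 < slope (g i) τ s :=
      hslope'.eventually (eventually_gt_nhds hdpos)
    obtain ⟨s, hsl, hs0, hsτ⟩ := (hevsl.and hevpos).exists
    have hsne : s - τ < 0 := by linarith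
    have hslval : slope (g i) τ s = (g i s - g i τ) / (s - τ) := by
      rw [slope_def_field]
    rw [hslval] at hsl
    have hnum : g i s - g i τ < 0 := by
      by_contra hc
      push_neg at hc
      have : (g i s - g i τ) / (s - τ) ≤ 0 := div_nonpos_iff.2 (Or.inl ⟨hc, hsne.le⟩)
      linarith
    have : 0 < g i s := hbefore s hs0.le hsτ i
    rw [heq] at hnum
    linarith
  -- conclude
  intro t ht i
  by_contra hc
  push_neg at hc
  set e : ℝ := Real.exp (L * t) with he
  have hepos : 0 < e := Real.exp_pos _
  have hεpos : 0 < (v t i - x t i) / e := div_pos (by linarith) hepos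
  have := key _ hεpos t ht i
  rw [div_mul_cancel₀ _ (ne_of_gt hepos)] at this
  linarith
end

section
/- For any β > 0, the AGT2 upper comparison system is globally attractive at the origin: every differentiable curve x : [0,∞) → ℝ^{S×A} × ℝ^{S×A} satisfying x'(t) = h(x(t)) for all t ≥ 0 converges to 0 (componentwise) as t → ∞. -/
open Finset Filter

/-- The AGT2 upper comparison field on `ℝ^{S×A} × ℝ^{S×A}`, indexed by
`(S × A) ⊕ (S × A)` (the first summand carries `x₁`, the second carries `x₂`). -/
noncomputable def agt2Upper {S A : Type*} [Fintype S] [Fintype A] [Nonempty A]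
    (P : S → A → S → ℝ) (γ β : ℝ) (d : S → A → ℝ)
    (x : (S × A) ⊕ (S × A) → ℝ) : (S × A) ⊕ (S × A) → ℝ :=
  Sum.elim
    (fun p => -(d p.1 p.2) * x (Sum.inl p) +
      γ * d p.1 p.2 * ∑ s', P p.1 p.2 s' *
        (univ.sup' univ_nonempty fun a' => x (Sum.inr (s', a'))))
    (fun p => β * d p.1 p.2 * (x (Sum.inl p) - x (Sum.inr p)))

open Set Topology

private lemma frequently_slope_sup'_lt {κ : Type*} [Fintype κ] [Nonempty κ]
    {g : κ → ℝ → ℝ} {g' : κ → ℝ} {t r : ℝ}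
    (hd : ∀ k, HasDerivAt (g k) (g' k) t)
    (hr : ∀ k, g k t = (univ.sup' univ_nonempty fun j => g j t) → g' k < r) :
    ∃ᶠ z in 𝓝[>] t, (z - t)⁻¹ *
      ((univ.sup' univ_nonempty fun j => g j z) -
       (univ.sup' univ_nonempty fun j => g j t)) < r := by
  set f : ℝ → ℝ := fun z => univ.sup' univ_nonempty fun j => g j z with hfdef
  by_contra hcon
  rw [Filter.not_frequently] at hcon
  have hex : ∀ z, ∃ k : κ, f z = g k z := fun z => by
    obtain ⟨k, _, hk⟩ := Finset.exists_mem_eq_sup' (univ_nonempty) (fun j => g j z)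
    exact ⟨k, hk⟩
  have hkey : ∃ k : κ, ∃ᶠ z in 𝓝[>] t,
      ¬((z - t)⁻¹ * (f z - f t) < r) ∧ f z = g k z := by
    by_contra h
    push_neg at h
    have h' : ∀ᶠ z in 𝓝[>] t, ∀ k : κ,
        ¬(r ≤ (z - t)⁻¹ * (f z - f t) ∧ f z = g k z) := by
      rw [Filter.eventually_all]
      exact fun k => Filter.not_frequently.mp (by simpa using h k)
    have := (h'.and hcon).exists
    obtain ⟨z, hz1, hz2⟩ := this
    obtain ⟨k, hk⟩ := hex z
    exact hz1 k ⟨not_lt.mp hz2, hk⟩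
  obtain ⟨k, hfreq⟩ := hkey
  have hfc : ContinuousAt f t :=
    ContinuousAt.finset_sup'_apply univ_nonempty (fun j _ => (hd j).continuousAt)
  have hten : Tendsto (fun z => f z - g k z) (𝓝[>] t) (𝓝 (f t - g k t)) :=
    ((hfc.sub (hd k).continuousAt).tendsto).mono_left nhdsWithin_le_nhds
  have hact : f t = g k t := by
    have hmem : f t - g k t ∈ closure ({0} : Set ℝ) := by
      apply mem_closure_of_frequently_of_tendsto _ hten
      exact hfreq.mono fun z hz => by simp [hz.2]
    rw [closure_singleton] at hmem
    have : f t - g k t = 0 := hmem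
    linarith
  have hlt : g' k < r := hr k hact.symm
  have hslope : Tendsto (slope (g k) t) (𝓝[>] t) (𝓝 (g' k)) :=
    ((hasDerivAt_iff_tendsto_slope.mp (hd k)).mono_left
      (nhdsWithin_mono t fun z hz => ne_of_gt hz))
  have hev : ∀ᶠ z in 𝓝[>] t, slope (g k) t z < r :=
    hslope.eventually_lt_const hlt
  have hmem : ∀ᶠ z in 𝓝[>] t, t < z := eventually_mem_nhdsWithin
  obtain ⟨z, ⟨hz1, hz2⟩, hz3, hz4⟩ := (hfreq.and_eventually (hev.and hmem)).exists
  rw [not_lt] at hz1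
  have : (z - t)⁻¹ * (f z - f t) = slope (g k) t z := by
    rw [hz2, hact, slope_def_field, div_eq_inv_mul]
  linarith [this ▸ hz1]

theorem agt2_upper_system_globally_attractive
    {S A : Type*} [Fintype S] [Fintype A] [Nonempty S] [Nonempty A]
    (P : S → A → S → ℝ) (γ : ℝ) (hγ0 : 0 ≤ γ) (hγ1 : γ < 1)
    (hP0 : ∀ s a s', 0 ≤ P s a s') (hP1 : ∀ s a, ∑ s', P s a s' = 1)
    (β : ℝ) (hβ : 0 < β)
    (d : S → A → ℝ) (hd : ∀ s a, 0 < d s a)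
    (x : ℝ → (S × A) ⊕ (S × A) → ℝ)
    (hx : ∀ t : ℝ, 0 ≤ t → HasDerivAt x (agt2Upper P γ β d (x t)) t) :
    ∀ i, Tendsto (fun t => x t i) atTop (nhds 0) := by
  classical
  set c : ℝ := (1 + γ) / 2 with hcdef
  have hc0 : 0 < c := by positivity
  have hcγ : γ < c := by rw [hcdef]; linarith
  have hc1 : c < 1 := by rw [hcdef]; linarith
  set w : (S × A) ⊕ (S × A) → ℝ := Sum.elim (fun _ => 1) (fun _ => c) with hwdef
  have hw0 : ∀ i, 0 < w i := by rintro (p | p) <;> simp [hwdef, hc0]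
  have hwc : ∀ i, c ≤ w i := by rintro (p | p) <;> simp [hwdef, hc1.le]
  set g : ((S × A) ⊕ (S × A)) × Bool → ℝ → ℝ :=
    fun k z => (if k.2 then (1 : ℝ) else -1) * (w k.1 * x z k.1) with hgdef
  set V : ℝ → ℝ := fun z => univ.sup' univ_nonempty fun k => g k z with hVdef
  have hVub : ∀ z i, w i * x z i ≤ V z := fun z i => by
    have h : g (i, true) z ≤ V z := Finset.le_sup' (fun k => g k z) (Finset.mem_univ (i, true))
    have h2 : g (i, true) z = w i * x z i := by simp [hgdef]
    linarith
  have hVlb : ∀ z i, -(w i * x z i) ≤ V z := fun z i => by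
    have h : g (i, false) z ≤ V z := Finset.le_sup' (fun k => g k z) (Finset.mem_univ (i, false))
    have h2 : g (i, false) z = -(w i * x z i) := by simp [hgdef]
    linarith
  have hV0 : ∀ z, 0 ≤ V z := fun z => by
    obtain ⟨i⟩ : Nonempty ((S × A) ⊕ (S × A)) := inferInstance
    linarith [hVub z i, hVlb z i]
  have hxi : ∀ t : ℝ, 0 ≤ t → ∀ i, HasDerivAt (fun z => x z i)
      (agt2Upper P γ β d (x t) i) t := fun t ht i => (hasDerivAt_pi.mp (hx t ht)) i
  have gd : ∀ t : ℝ, 0 ≤ t → ∀ k, HasDerivAt (g k)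
      ((if k.2 then (1 : ℝ) else -1) * (w k.1 * agt2Upper P γ β d (x t) k.1)) t :=
    fun t ht k => ((hxi t ht k.1).const_mul (w k.1)).const_mul _
  set dmin : ℝ := univ.inf' univ_nonempty (fun p : S × A => d p.1 p.2) with hdmdef
  have hdmin0 : 0 < dmin := by
    rw [hdmdef, Finset.lt_inf'_iff]
    exact fun p _ => hd p.1 p.2
  have hdmin : ∀ p : S × A, dmin ≤ d p.1 p.2 := fun p =>
    Finset.inf'_le _ (Finset.mem_univ p)
  have hγc : γ / c < 1 := (div_lt_one hc0).mpr hcγ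
  set lam : ℝ := min (dmin * (1 - γ / c)) (β * dmin * (1 - c)) with hlamdef
  have hlam0 : 0 < lam :=
    lt_min (mul_pos hdmin0 (by linarith)) (mul_pos (mul_pos hβ hdmin0) (by linarith))
  have hlam1 : lam ≤ dmin * (1 - γ / c) := min_le_left _ _
  have hlam2 : lam ≤ β * dmin * (1 - c) := min_le_right _ _
  -- key derivative bound at active indices
  have key : ∀ t : ℝ, 0 ≤ t → ∀ k, g k t = V t →
      (if k.2 then (1 : ℝ) else -1) * (w k.1 * agt2Upper P γ β d (x t) k.1)
        ≤ -lam * V t := by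
    intro t ht k hk
    have hub2 : ∀ s' : S, (univ.sup' univ_nonempty fun a' => x t (Sum.inr (s', a')))
        ≤ V t / c := by
      intro s'
      apply Finset.sup'_le
      intro a' _
      rw [le_div_iff₀ hc0, mul_comm]
      have := hVub t (Sum.inr (s', a'))
      simpa [hwdef] using this
    have hlb2 : ∀ s' : S, -(V t / c) ≤
        (univ.sup' univ_nonempty fun a' => x t (Sum.inr (s', a'))) := by
      intro s'
      obtain ⟨a0⟩ : Nonempty A := inferInstance
      refine le_trans ?_ (Finset.le_sup' (fun a' => x t (Sum.inr (s', a'))) (Finset.mem_univ a0))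
      rw [neg_le, le_div_iff₀ hc0]
      have := hVlb t (Sum.inr (s', a0))
      simp only [hwdef, Sum.elim_inr] at this
      linarith
    have hsum_ub : ∀ p : S × A, (∑ s', P p.1 p.2 s' *
        (univ.sup' univ_nonempty fun a' => x t (Sum.inr (s', a')))) ≤ V t / c := by
      intro p
      calc (∑ s', P p.1 p.2 s' * (univ.sup' univ_nonempty fun a' => x t (Sum.inr (s', a'))))
          ≤ ∑ s', P p.1 p.2 s' * (V t / c) :=
            Finset.sum_le_sum fun s' _ =>
              mul_le_mul_of_nonneg_left (hub2 s') (hP0 p.1 p.2 s')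
        _ = V t / c := by rw [← Finset.sum_mul, hP1, one_mul]
    have hsum_lb : ∀ p : S × A, -(V t / c) ≤ (∑ s', P p.1 p.2 s' *
        (univ.sup' univ_nonempty fun a' => x t (Sum.inr (s', a')))) := by
      intro p
      calc -(V t / c) = ∑ s', P p.1 p.2 s' * (-(V t / c)) := by
            rw [← Finset.sum_mul, hP1, one_mul]
        _ ≤ _ := Finset.sum_le_sum fun s' _ =>
              mul_le_mul_of_nonneg_left (hlb2 s') (hP0 p.1 p.2 s')
    obtain ⟨i, b⟩ := k
    rcases i with p | p
    · -- x₁ component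
      have hdp := hd p.1 p.2
      have hdm := hdmin p
      have hsu := hsum_ub p
      have hsl := hsum_lb p
      have e1 : (0 : ℝ) ≤ 1 - γ / c := by linarith
      have h1 : lam * V t ≤ d p.1 p.2 * (1 - γ / c) * V t :=
        mul_le_mul_of_nonneg_right
          (hlam1.trans (mul_le_mul_of_nonneg_right hdm e1)) (hV0 t)
      have hgd' : γ * d p.1 p.2 * (∑ s', P p.1 p.2 s' *
          (univ.sup' univ_nonempty fun a' => x t (Sum.inr (s', a'))))
          ≤ γ * d p.1 p.2 * (V t / c) :=
        mul_le_mul_of_nonneg_left hsu (by positivity)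
      have hgl' : γ * d p.1 p.2 * (-(V t / c)) ≤ γ * d p.1 p.2 * (∑ s', P p.1 p.2 s' *
          (univ.sup' univ_nonempty fun a' => x t (Sum.inr (s', a')))) :=
        mul_le_mul_of_nonneg_left hsl (by positivity)
      have hid : d p.1 p.2 * (1 - γ / c) * V t
          = d p.1 p.2 * V t - γ * d p.1 p.2 * (V t / c) := by ring
      cases b
      · -- b = false : x₁ = -V
        simp only [hgdef, hwdef, Sum.elim_inl, Bool.false_eq_true, if_false, one_mul,
          neg_mul, neg_eq_iff_eq_neg] at hk
        simp only [agt2Upper, Sum.elim_inl, hwdef, Bool.false_eq_true, if_false, one_mul, hk]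
        linarith [h1, hgl', hid]
      · -- b = true : x₁ = V
        simp only [hgdef, hwdef, Sum.elim_inl, if_true, one_mul] at hk
        simp only [agt2Upper, Sum.elim_inl, hwdef, if_true, one_mul, hk]
        linarith [h1, hgd', hid]
    · -- x₂ component
      have hdp := hd p.1 p.2
      have hdm := hdmin p
      have e1 : (0 : ℝ) ≤ 1 - c := by linarith
      have h2 : lam * V t ≤ β * d p.1 p.2 * (1 - c) * V t :=
        mul_le_mul_of_nonneg_right
          (hlam2.trans (mul_le_mul_of_nonneg_right
            (mul_le_mul_of_nonneg_left hdm hβ.le) e1)) (hV0 t)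
      cases b
      · -- b = false : c * x₂ = -V
        simp only [hgdef, hwdef, Sum.elim_inr, Bool.false_eq_true, if_false,
          neg_mul, one_mul, neg_eq_iff_eq_neg] at hk
        have hx1 : -(V t) ≤ x t (Sum.inl p) := by
          have := hVlb t (Sum.inl p); simp only [hwdef, Sum.elim_inl, one_mul] at this; linarith
        have hx1' : c * (β * d p.1 p.2) * (-(V t)) ≤ c * (β * d p.1 p.2) * x t (Sum.inl p) :=
          mul_le_mul_of_nonneg_left hx1 (by positivity)
        have hk2 : β * d p.1 p.2 * (c * x t (Sum.inr p)) = β * d p.1 p.2 * (-(V t)) := by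
          rw [hk]
        simp only [agt2Upper, Sum.elim_inr, hwdef, Bool.false_eq_true, if_false]
        nlinarith [hx1', hk2, h2]
      · -- b = true : c * x₂ = V
        simp only [hgdef, hwdef, Sum.elim_inr, if_true, one_mul] at hk
        have hx1 : x t (Sum.inl p) ≤ V t := by
          have := hVub t (Sum.inl p); simp only [hwdef, Sum.elim_inl, one_mul] at this; linarith
        have hx1' : c * (β * d p.1 p.2) * x t (Sum.inl p) ≤ c * (β * d p.1 p.2) * V t :=
          mul_le_mul_of_nonneg_left hx1 (by positivity)
        have hk2 : β * d p.1 p.2 * (c * x t (Sum.inr p)) = β * d p.1 p.2 * V t := by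
          rw [hk]
        simp only [agt2Upper, Sum.elim_inr, hwdef, if_true, one_mul]
        nlinarith [hx1', hk2, h2]
  -- Grönwall: V t ≤ V 0 * exp (-lam * t)
  have main : ∀ T : ℝ, 0 ≤ T → V T ≤ V 0 * Real.exp (-lam * T) := by
    intro T hT
    have hcont : ContinuousOn V (Icc 0 T) := fun z hz =>
      (ContinuousAt.finset_sup'_apply univ_nonempty
        (fun k _ => ((gd z hz.1 k).continuousAt))).continuousWithinAt
    have hslope : ∀ z ∈ Ico (0 : ℝ) T, ∀ r, -lam * V z < r →
        ∃ᶠ u in 𝓝[>] z, (u - z)⁻¹ * (V u - V z) < r := by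
      intro z hz r hr
      exact frequently_slope_sup'_lt (gd z hz.1)
        (fun k hk => lt_of_le_of_lt (key z hz.1 k hk) hr)
    have hbound : ∀ z ∈ Ico (0 : ℝ) T, -lam * V z ≤ -lam * V z + 0 := by
      intro z _; simp
    have := le_gronwallBound_of_liminf_deriv_right_le (f := V)
      (f' := fun z => -lam * V z) (δ := V 0) (K := -lam) (ε := 0) (a := 0) (b := T)
      hcont hslope le_rfl hbound T (Set.right_mem_Icc.mpr hT)
    rwa [sub_zero, gronwallBound_ε0] at this
  -- conclude
  intro i
  have hbd : ∀ᶠ t in atTop, |x t i| ≤ (V 0 / c) * Real.exp (-lam * t) := by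
    filter_upwards [eventually_ge_atTop (0 : ℝ)] with t ht
    have h1 : w i * x t i ≤ V t := hVub t i
    have h2 : -(w i * x t i) ≤ V t := hVlb t i
    have habs : |x t i| * c ≤ V t := by
      rcases abs_cases (x t i) with ⟨he, _⟩ | ⟨he, _⟩ <;> rw [he] <;>
        nlinarith [hwc i, hw0 i, hV0 t, abs_nonneg (x t i)]
    have hm := main t ht
    calc |x t i| ≤ V t / c := (le_div_iff₀ hc0).mpr habs
      _ ≤ V 0 * Real.exp (-lam * t) / c := by
          gcongr
      _ = V 0 / c * Real.exp (-lam * t) := by ring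
  have hexp0 : Tendsto (fun t : ℝ => Real.exp (-lam * t)) atTop (nhds 0) := by
    rw [Real.tendsto_exp_comp_nhds_zero]
    have h1 : Tendsto (fun t : ℝ => lam * t) atTop atTop :=
      tendsto_id.const_mul_atTop hlam0
    have h2 := tendsto_neg_atTop_atBot.comp h1
    refine h2.congr fun t => ?_
    simp [Function.comp, neg_mul]
  have hexp : Tendsto (fun t : ℝ => (V 0 / c) * Real.exp (-lam * t)) atTop (nhds 0) := by
    simpa using hexp0.const_mul (V 0 / c)
  have hlow : Tendsto (fun t : ℝ => -((V 0 / c) * Real.exp (-lam * t))) atTop (nhds 0) := by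
    simpa using hexp.neg
  apply tendsto_of_tendsto_of_tendsto_of_le_of_le' hlow hexp
  · filter_upwards [hbd] with t ht
    have := abs_le.mp ht
    linarith [this.1]
  · filter_upwards [hbd] with t ht
    exact (le_abs_self _).trans ht
end

section
/- For any β > 0, the AGT2 ODE model is globally attractive at (Q*, Q*): every differentiable curve t ↦ (Qᴬ_t, Qᴮ_t) : [0,∞) → ℝ^{S×A} × ℝ^{S×A} satisfying, for all t ≥ 0 and all (s,a) ∈ S×A, d/dt Qᴬ_t(s,a) = d(s,a)·(Σ_{s'} P(s'|s,a)·(r(s,a,s') + γ·max_{a'} Qᴮ_t(s',a')) − Qᴬ_t(s,a)) and d/dt Qᴮ_t(s,a) = β·d(s,a)·(Qᴬ_t(s,a) − Qᴮ_t(s,a)) converges as t → ∞ to Qᴬ_t → Q* and Qᴮ_t → Q* (componentwise). -/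
open Finset

open Filter Set Topology

section Aux

lemma sup_decay {ι : Type*} [Fintype ι] [Nonempty ι]
    (g g' : ℝ → ι → ℝ)
    (hg : ∀ i, ∀ t : ℝ, 0 ≤ t → HasDerivAt (fun u => g u i) (g' t i) t)
    (c : ℝ) (hc : 0 < c)
    (hbound : ∀ t : ℝ, 0 ≤ t → ∀ i,
      g t i = univ.sup' univ_nonempty (g t ·) → 0 < g t i →
      g' t i ≤ -c * g t i)
    (h0 : 0 ≤ univ.sup' univ_nonempty (g 0 ·)) :
    ∀ t : ℝ, 0 ≤ t → univ.sup' univ_nonempty (g t ·) ≤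
      (univ.sup' univ_nonempty (g 0 ·) + 1) * Real.exp (-(c / 2) * t) := by
  set N : ℝ → ℝ := fun t => univ.sup' univ_nonempty (g t ·) with hN
  set K : ℝ := N 0 + 1 with hK
  have hK0 : 0 < K := by positivity
  set B : ℝ → ℝ := fun t => K * Real.exp (-(c / 2) * t) with hB
  set B' : ℝ → ℝ := fun t => K * (Real.exp (-(c / 2) * t) * -(c / 2)) with hB'
  have hBderiv : ∀ x : ℝ, HasDerivAt B (B' x) x := by
    intro x
    have h1 : HasDerivAt (fun t : ℝ => -(c / 2) * t) (-(c / 2)) x := by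
      simpa using (hasDerivAt_id x).const_mul (-(c / 2))
    exact ((Real.hasDerivAt_exp _).comp x h1).const_mul K
  have hBpos : ∀ x : ℝ, 0 < B x := fun x => by positivity
  classical
  set f' : ℝ → ℝ := fun x => sSup ((g' x) '' {i | g x i = N x}) with hf'def
  have hact : ∀ x : ℝ, {i | g x i = N x}.Nonempty := by
    intro x
    obtain ⟨i, _, hi⟩ := Finset.exists_mem_eq_sup' (univ_nonempty) (g x ·)
    exact ⟨i, hi.symm⟩
  have hfin : ∀ x : ℝ, ((g' x) '' {i | g x i = N x}).Finite :=
    fun x => (Set.toFinite _).image _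
  intro t ht
  have key : ∀ x ∈ Icc (0:ℝ) t, N x ≤ B x := by
    apply image_le_of_liminf_slope_right_lt_deriv_boundary' (f' := f')
      (B := B) (B' := B')
    · apply ContinuousOn.finset_sup'_apply
      intro i _
      intro x hx
      exact ((hg i x hx.1).continuousAt).continuousWithinAt
    · intro x hx rr hrr
      apply Filter.Eventually.frequently
      have hbig : ∀ i : ι, ∀ᶠ z in 𝓝[>] x, g z i < N x + rr * (z - x) := by
        intro i
        by_cases hi : g x i = N x
        · have hgi : g' x i ≤ f' x := by
            apply le_csSup ((hfin x).bddAbove)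
            exact ⟨i, hi, rfl⟩
          have hlt : g' x i < rr := lt_of_le_of_lt hgi hrr
          have hslope : Tendsto (slope (fun u => g u i) x) (𝓝[≠] x) (𝓝 (g' x i)) :=
            hasDerivAt_iff_tendsto_slope.1 (hg i x hx.1)
          have hev : ∀ᶠ z in 𝓝[≠] x, slope (fun u => g u i) x z < rr :=
            hslope.eventually (eventually_lt_nhds hlt)
          have hev2 : ∀ᶠ z in 𝓝[>] x, slope (fun u => g u i) x z < rr :=
            nhdsWithin_mono x (fun z hz => ne_of_gt hz) hev
          filter_upwards [hev2, self_mem_nhdsWithin] with z hz hz2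
          have hzx : 0 < z - x := sub_pos.2 hz2
          rw [slope_def_field] at hz
          rw [div_lt_iff₀ hzx] at hz
          linarith [hz, hi.le, hi.ge]
        · have hlt : g x i < N x := lt_of_le_of_ne (Finset.le_sup' _ (mem_univ i)) hi
          have hc1 : Tendsto (fun z => g z i) (𝓝 x) (𝓝 (g x i)) :=
            (hg i x hx.1).continuousAt
          have hc2 : Tendsto (fun z => N x + rr * (z - x)) (𝓝 x) (𝓝 (N x)) := by
            have : Tendsto (fun z : ℝ => N x + rr * (z - x)) (𝓝 x)
                (𝓝 (N x + rr * (x - x))) := by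
              apply Tendsto.const_add
              exact (tendsto_id.sub_const x).const_mul rr
            simpa using this
          have := hc1.eventually_lt hc2 hlt
          exact nhdsWithin_le_nhds this
      have hall : ∀ᶠ z in 𝓝[>] x, ∀ i : ι, g z i < N x + rr * (z - x) :=
        eventually_all.2 hbig
      filter_upwards [hall, self_mem_nhdsWithin] with z hz hz2
      have hzx : 0 < z - x := sub_pos.2 hz2
      have hNz : N z < N x + rr * (z - x) :=
        (Finset.sup'_lt_iff univ_nonempty).2 fun i _ => hz i
      rw [slope_def_field, div_lt_iff₀ hzx]
      linarith
    · simp only [hB, hK]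
      norm_num
    · exact fun x _ => (hBderiv x).continuousAt.continuousWithinAt
    · exact fun x _ => (hBderiv x).hasDerivWithinAt
    · intro x hx hxB
      have hNpos : 0 < N x := hxB ▸ hBpos x
      have hle : f' x ≤ -c * N x := by
        apply csSup_le ((hact x).image _)
        rintro y ⟨i, hi, rfl⟩
        have := hbound x hx.1 i hi (by rw [hi]; exact hNpos)
        rwa [hi] at this
      calc f' x ≤ -c * N x := hle
        _ < B' x := by
            have hBN : B x = N x := hxB.symm
            have hBB : B' x = -(c/2) * B x := by simp only [hB', hB]; ring
            rw [hBB, hBN]; nlinarith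
  exact key t ⟨ht, le_refl t⟩

lemma maxQ_abs_sub_le {S A : Type*} [Fintype A] [Nonempty A]
    (Q Q' : S → A → ℝ) (s : S) (M : ℝ)
    (h : ∀ a, |Q s a - Q' s a| ≤ M) : |maxQ Q s - maxQ Q' s| ≤ M := by
  unfold maxQ
  rw [abs_le]
  constructor
  · have : univ.sup' univ_nonempty (fun a' => Q' s a') ≤
        univ.sup' univ_nonempty (fun a' => Q s a') + M := by
      apply Finset.sup'_le
      intro a _
      have h1 := (abs_le.1 (h a)).1
      have h2 : Q s a ≤ univ.sup' univ_nonempty (fun a' => Q s a') :=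
        Finset.le_sup' _ (mem_univ a)
      linarith
    linarith
  · have : univ.sup' univ_nonempty (fun a' => Q s a') ≤
        univ.sup' univ_nonempty (fun a' => Q' s a') + M := by
      apply Finset.sup'_le
      intro a _
      have h1 := (abs_le.1 (h a)).2
      have h2 : Q' s a ≤ univ.sup' univ_nonempty (fun a' => Q' s a') :=
        Finset.le_sup' _ (mem_univ a)
      linarith
    linarith

end Aux

set_option maxHeartbeats 1000000 in
theorem agt2_ode_globally_attractive
    {S A : Type*} [Fintype S] [Fintype A] [Nonempty S] [Nonempty A]
    (P r : S → A → S → ℝ) (γ : ℝ) (hγ0 : 0 ≤ γ) (hγ1 : γ < 1)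
    (hP0 : ∀ s a s', 0 ≤ P s a s') (hP1 : ∀ s a, ∑ s', P s a s' = 1)
    (Qstar : S → A → ℝ) (hQstar : bellmanT P r γ Qstar = Qstar)
    (β : ℝ) (hβ : 0 < β)
    (d : S → A → ℝ) (hd : ∀ s a, 0 < d s a)
    (QA QB : ℝ → S → A → ℝ)
    (hQA : ∀ (s : S) (a : A), ∀ t : ℝ, 0 ≤ t → HasDerivAt (fun u => QA u s a)
      (d s a * ((∑ s', P s a s' * (r s a s' + γ * maxQ (QB t) s')) - QA t s a)) t)
    (hQB : ∀ (s : S) (a : A), ∀ t : ℝ, 0 ≤ t → HasDerivAt (fun u => QB u s a)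
      (β * d s a * (QA t s a - QB t s a)) t) :
    ∀ s a, Tendsto (fun t => QA t s a) atTop (nhds (Qstar s a)) ∧
      Tendsto (fun t => QB t s a) atTop (nhds (Qstar s a)) := by
  classical
  set α : ℝ := (1 + γ) / 2 with hα
  have hα0 : 0 < α := by simp only [hα]; linarith
  have hα1 : α < 1 := by simp only [hα]; linarith
  have hγα : γ < α := by simp only [hα]; linarith
  have hγα' : γ / α < 1 := (div_lt_one hα0).2 hγα
  -- the index type and the family of signed error coordinates
  set g : ℝ → ((S × A) × Bool × Bool) → ℝ := fun t i =>
    (if i.2.2 then (1:ℝ) else -1) *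
      (if i.2.1 then QA t i.1.1 i.1.2 - Qstar i.1.1 i.1.2
       else α * (QB t i.1.1 i.1.2 - Qstar i.1.1 i.1.2)) with hg_def
  set g' : ℝ → ((S × A) × Bool × Bool) → ℝ := fun t i =>
    (if i.2.2 then (1:ℝ) else -1) *
      (if i.2.1 then d i.1.1 i.1.2 *
          ((∑ s', P i.1.1 i.1.2 s' * (r i.1.1 i.1.2 s' + γ * maxQ (QB t) s')) - QA t i.1.1 i.1.2)
       else α * (β * d i.1.1 i.1.2 * (QA t i.1.1 i.1.2 - QB t i.1.1 i.1.2))) with hg'_def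
  set N : ℝ → ℝ := fun t => univ.sup' univ_nonempty (g t ·) with hN_def
  -- the decay constant
  set c : ℝ := univ.inf' univ_nonempty
    (fun p : S × A => min (d p.1 p.2 * (1 - γ / α)) (β * d p.1 p.2 * (1 - α))) with hc_def
  have hc0 : 0 < c := by
    rw [hc_def]
    apply (Finset.lt_inf'_iff _).2
    intro p _
    apply lt_min
    · have h1 := hd p.1 p.2
      have h2 : 0 < 1 - γ / α := by linarith
      positivity
    · have h1 := hd p.1 p.2
      have h2 : 0 < 1 - α := by linarith
      positivity
  have hcle : ∀ s a, c ≤ d s a * (1 - γ / α) ∧ c ≤ β * d s a * (1 - α) := by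
    intro s a
    constructor
    · exact le_trans (Finset.inf'_le _ (mem_univ (s, a))) (min_le_left _ _)
    · exact le_trans (Finset.inf'_le _ (mem_univ (s, a))) (min_le_right _ _)
  -- derivatives
  have hg : ∀ i, ∀ t : ℝ, 0 ≤ t → HasDerivAt (fun u => g u i) (g' t i) t := by
    rintro ⟨⟨s, a⟩, w, sg⟩ t ht
    have hA : HasDerivAt (fun u => QA u s a - Qstar s a)
        (d s a * ((∑ s', P s a s' * (r s a s' + γ * maxQ (QB t) s')) - QA t s a)) t :=
      (hQA s a t ht).sub_const _
    have hB : HasDerivAt (fun u => α * (QB u s a - Qstar s a))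
        (α * (β * d s a * (QA t s a - QB t s a))) t :=
      ((hQB s a t ht).sub_const _).const_mul α
    cases w <;> cases sg <;>
      simp only [hg_def, hg'_def, if_true, if_false, Bool.false_eq_true, cond_false, cond_true] <;>
      first
        | exact hB.const_mul _
        | exact hA.const_mul _
  -- component bounds by N
  have hle : ∀ t s a, (QA t s a - Qstar s a ≤ N t) ∧ (-(QA t s a - Qstar s a) ≤ N t) ∧
      (α * (QB t s a - Qstar s a) ≤ N t) ∧ (-(α * (QB t s a - Qstar s a)) ≤ N t) := by
    intro t s a
    refine ⟨?_, ?_, ?_, ?_⟩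
    · have h := Finset.le_sup' (g t ·) (mem_univ ((s, a), true, true))
      have h2 : g t ((s, a), true, true) = QA t s a - Qstar s a := by
        simp [hg_def]
      rw [h2] at h
      exact h
    · have h := Finset.le_sup' (g t ·) (mem_univ ((s, a), true, false))
      have h2 : g t ((s, a), true, false) = -(QA t s a - Qstar s a) := by
        simp [hg_def]
      rw [h2] at h
      exact h
    · have h := Finset.le_sup' (g t ·) (mem_univ ((s, a), false, true))
      have h2 : g t ((s, a), false, true) = α * (QB t s a - Qstar s a) := by
        simp [hg_def]
      rw [h2] at h
      exact h
    · have h := Finset.le_sup' (g t ·) (mem_univ ((s, a), false, false))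
      have h2 : g t ((s, a), false, false) = -(α * (QB t s a - Qstar s a)) := by
        simp [hg_def]
      rw [h2] at h
      exact h
  have h0 : 0 ≤ N 0 := by
    obtain ⟨s⟩ := (inferInstance : Nonempty S)
    obtain ⟨a⟩ := (inferInstance : Nonempty A)
    have h1 := (hle 0 s a).1
    have h2 := (hle 0 s a).2.1
    linarith [(hle 0 s a).1, (hle 0 s a).2.1]
  -- the key derivative bound at maximizing coordinates
  have hbound : ∀ t : ℝ, 0 ≤ t → ∀ i, g t i = univ.sup' univ_nonempty (g t ·) →
      0 < g t i → g' t i ≤ -c * g t i := by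
    intro t ht i hi hpos
    have hiN : g t i = N t := hi
    have hn : 0 < N t := hiN ▸ hpos
    have hmax : ∀ s', |maxQ (QB t) s' - maxQ Qstar s'| ≤ N t / α := by
      intro s'
      apply maxQ_abs_sub_le
      intro a'
      have h3 := (hle t s' a').2.2.1
      have h4 := (hle t s' a').2.2.2
      have h5 : |α * (QB t s' a' - Qstar s' a')| ≤ N t :=
        abs_le.2 ⟨by linarith, h3⟩
      rw [abs_mul, abs_of_pos hα0] at h5
      rw [le_div_iff₀ hα0]
      linarith [abs_nonneg (QB t s' a' - Qstar s' a')]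
    have hF : ∀ s a, |(∑ s', P s a s' * (r s a s' + γ * maxQ (QB t) s')) - Qstar s a|
        ≤ γ * (N t / α) := by
      intro s a
      have hstar : Qstar s a = ∑ s', P s a s' * (r s a s' + γ * maxQ Qstar s') := by
        conv_lhs => rw [← hQstar]
        rfl
      rw [hstar, ← Finset.sum_sub_distrib]
      refine le_trans (Finset.abs_sum_le_sum_abs _ _) ?_
      have hterm : ∀ s' ∈ Finset.univ, |P s a s' * (r s a s' + γ * maxQ (QB t) s') -
          P s a s' * (r s a s' + γ * maxQ Qstar s')| ≤ P s a s' * (γ * (N t / α)) := by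
        intro s' _
        have heq : P s a s' * (r s a s' + γ * maxQ (QB t) s') -
            P s a s' * (r s a s' + γ * maxQ Qstar s') =
            P s a s' * (γ * (maxQ (QB t) s' - maxQ Qstar s')) := by ring
        rw [heq, abs_mul, abs_mul, abs_of_nonneg (hP0 s a s'), abs_of_nonneg hγ0]
        exact mul_le_mul_of_nonneg_left
          (mul_le_mul_of_nonneg_left (hmax s') hγ0) (hP0 s a s')
      refine le_trans (Finset.sum_le_sum hterm) ?_
      rw [← Finset.sum_mul, hP1, one_mul]
    obtain ⟨⟨s, a⟩, w, sg⟩ := i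
    have hFd := abs_le.1 (hF s a)
    have heA := (hle t s a).1
    have heA' := (hle t s a).2.1
    have hdp := hd s a
    obtain ⟨hc1, hc2⟩ := hcle s a
    have hprod1 : 0 ≤ (d s a * (1 - γ / α) - c) * N t :=
      mul_nonneg (sub_nonneg.2 hc1) hn.le
    have hprod2 : 0 ≤ (β * d s a * (1 - α) - c) * N t :=
      mul_nonneg (sub_nonneg.2 hc2) hn.le
    cases w <;> cases sg
    · -- w = false, sg = false
      have hv : g t ((s, a), false, false) = -(α * (QB t s a - Qstar s a)) := by
        simp [hg_def]
      have hv' : g' t ((s, a), false, false) =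
          -(α * (β * d s a * (QA t s a - QB t s a))) := by
        simp [hg'_def]
      rw [hv] at hiN hpos
      rw [hv', hv, hiN]
      have key : -(α * (β * d s a * (QA t s a - QB t s a))) =
          β * d s a * (α * (-(QA t s a - Qstar s a)) - N t) := by
        rw [← hiN]; ring
      rw [key]
      have h1 : α * (-(QA t s a - Qstar s a)) ≤ α * N t :=
        mul_le_mul_of_nonneg_left heA' hα0.le
      have h2 : β * d s a * (α * (-(QA t s a - Qstar s a)) - N t) ≤
          β * d s a * (α * N t - N t) :=
        mul_le_mul_of_nonneg_left (by linarith) (by positivity)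
      nlinarith [hprod2]
    · -- w = false, sg = true
      have hv : g t ((s, a), false, true) = α * (QB t s a - Qstar s a) := by
        simp [hg_def]
      have hv' : g' t ((s, a), false, true) =
          α * (β * d s a * (QA t s a - QB t s a)) := by
        simp [hg'_def]
      rw [hv] at hiN hpos
      rw [hv', hv, hiN]
      have key : α * (β * d s a * (QA t s a - QB t s a)) =
          β * d s a * (α * (QA t s a - Qstar s a) - N t) := by
        rw [← hiN]; ring
      rw [key]
      have h1 : α * (QA t s a - Qstar s a) ≤ α * N t :=
        mul_le_mul_of_nonneg_left heA hα0.le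
      have h2 : β * d s a * (α * (QA t s a - Qstar s a) - N t) ≤
          β * d s a * (α * N t - N t) :=
        mul_le_mul_of_nonneg_left (by linarith) (by positivity)
      nlinarith [hprod2]
    · -- w = true, sg = false
      have hv : g t ((s, a), true, false) = -(QA t s a - Qstar s a) := by
        simp [hg_def]
      have hv' : g' t ((s, a), true, false) =
          -(d s a * ((∑ s', P s a s' * (r s a s' + γ * maxQ (QB t) s')) - QA t s a)) := by
        simp [hg'_def]
      rw [hv] at hiN hpos
      rw [hv', hv, hiN]
      have key : -(d s a * ((∑ s', P s a s' * (r s a s' + γ * maxQ (QB t) s')) - QA t s a)) =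
          d s a * (-((∑ s', P s a s' * (r s a s' + γ * maxQ (QB t) s')) - Qstar s a) - N t) := by
        rw [← hiN]; ring
      rw [key]
      have h1 : -((∑ s', P s a s' * (r s a s' + γ * maxQ (QB t) s')) - Qstar s a)
          ≤ γ * (N t / α) := by linarith [hFd.1]
      have h2 : d s a * (-((∑ s', P s a s' * (r s a s' + γ * maxQ (QB t) s')) - Qstar s a) - N t)
          ≤ d s a * (γ * (N t / α) - N t) :=
        mul_le_mul_of_nonneg_left (by linarith) hdp.le
      have h3 : d s a * (γ * (N t / α) - N t) = -(d s a * (1 - γ / α)) * N t := by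
        field_simp
        ring
      nlinarith [hprod1]
    · -- w = true, sg = true
      have hv : g t ((s, a), true, true) = QA t s a - Qstar s a := by
        simp [hg_def]
      have hv' : g' t ((s, a), true, true) =
          d s a * ((∑ s', P s a s' * (r s a s' + γ * maxQ (QB t) s')) - QA t s a) := by
        simp [hg'_def]
      rw [hv] at hiN hpos
      rw [hv', hv, hiN]
      have key : d s a * ((∑ s', P s a s' * (r s a s' + γ * maxQ (QB t) s')) - QA t s a) =
          d s a * (((∑ s', P s a s' * (r s a s' + γ * maxQ (QB t) s')) - Qstar s a) - N t) := by
        rw [← hiN]; ring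
      rw [key]
      have h2 : d s a * (((∑ s', P s a s' * (r s a s' + γ * maxQ (QB t) s')) - Qstar s a) - N t)
          ≤ d s a * (γ * (N t / α) - N t) :=
        mul_le_mul_of_nonneg_left (by linarith [hFd.2]) hdp.le
      have h3 : d s a * (γ * (N t / α) - N t) = -(d s a * (1 - γ / α)) * N t := by
        field_simp
        ring
      nlinarith [hprod1]
  -- exponential decay of N
  have hdecay : ∀ t : ℝ, 0 ≤ t → N t ≤ (N 0 + 1) * Real.exp (-(c / 2) * t) :=
    sup_decay g g' hg c hc0 hbound h0
  have hexp : Tendsto (fun t : ℝ => (N 0 + 1) * Real.exp (-(c / 2) * t)) atTop (nhds 0) := by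
    have h1 : Tendsto (fun t : ℝ => -(c / 2) * t) atTop atBot :=
      Tendsto.const_mul_atTop_of_neg (by linarith) tendsto_id
    have h2 := Real.tendsto_exp_atBot.comp h1
    have h3 := h2.const_mul (N 0 + 1)
    simpa using h3
  have hexp' : Tendsto (fun t : ℝ => -((N 0 + 1) * Real.exp (-(c / 2) * t))) atTop (nhds 0) := by
    simpa using hexp.neg
  intro s a
  have hAtend : Tendsto (fun t => QA t s a - Qstar s a) atTop (nhds 0) := by
    apply tendsto_of_tendsto_of_tendsto_of_le_of_le' hexp' hexp
    · filter_upwards [eventually_ge_atTop (0 : ℝ)] with t ht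
      have h1 := (hle t s a).2.1
      have hNt := hdecay t ht
      linarith
    · filter_upwards [eventually_ge_atTop (0 : ℝ)] with t ht
      have h1 := (hle t s a).1
      have hNt := hdecay t ht
      linarith
  have hBtend0 : Tendsto (fun t => α * (QB t s a - Qstar s a)) atTop (nhds 0) := by
    apply tendsto_of_tendsto_of_tendsto_of_le_of_le' hexp' hexp
    · filter_upwards [eventually_ge_atTop (0 : ℝ)] with t ht
      have h1 := (hle t s a).2.2.2
      have hNt := hdecay t ht
      linarith
    · filter_upwards [eventually_ge_atTop (0 : ℝ)] with t ht
      have h1 := (hle t s a).2.2.1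
      have hNt := hdecay t ht
      linarith
  have hBtend : Tendsto (fun t => QB t s a - Qstar s a) atTop (nhds 0) := by
    have h1 := hBtend0.const_mul (1 / α)
    simp only [mul_zero] at h1
    have heq : (fun t => (1 / α) * (α * (QB t s a - Qstar s a))) =
        fun t => QB t s a - Qstar s a := by
      funext t
      field_simp
    rwa [heq] at h1
  constructor
  · have h1 := hAtend.add_const (Qstar s a)
    simpa using h1
  · have h1 := hBtend.add_const (Qstar s a)
    simpa using h1
end

section
/- Convergence of AGT2-QL: let β > 0, let (α_k)_{k≥0} be deterministic step sizes with 0 ≤ α_k ≤ 1, Σ_{k} α_k = ∞ and Σ_{k} α_k² < ∞, and on a probability space let (s_k, a_k, s'_k)_{k≥0} be i.i.d. S×A×S-valued random variables whose common law assigns probability d(s,a)·P(s'|s,a) to (s,a,s'), where d(s,a) > 0 for all (s,a). Define random sequences Qᴬ_k, Qᴮ_k : S×A → ℝ by arbitrary deterministic initializations Qᴬ_0, Qᴮ_0 and the recursion: Qᴬ_{k+1}(s,a) = Qᴬ_k(s,a) + α_k·1{(s,a)=(s_k,a_k)}·(r(s_k,a_k,s'_k) + γ·max_{a'∈A} Qᴮ_k(s'_k,a')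 − Qᴬ_k(s_k,a_k)) and Qᴮ_{k+1}(s,a) = Qᴮ_k(s,a) + α_k·β·1{(s,a)=(s_k,a_k)}·(Qᴬ_k(s_k,a_k) − Qᴮ_k(s_k,a_k)). Then, with probability one, Qᴬ_k(s,a) → Q*(s,a) and Qᴮ_k(s,a) → Q*(s,a) as k → ∞ for every (s,a) ∈ S×A. -/
open Finset

open Filter MeasureTheory ProbabilityTheory

namespace AGT2

section Det

variable {S A : Type*} [Fintype S] [Fintype A] [Nonempty S] [Nonempty A]

lemma abs_le_supNorm (Q : S → A → ℝ) (s : S) (a : A) : |Q s a| ≤ supNorm Q :=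
  Finset.le_sup' (f := fun p : S × A => |Q p.1 p.2|) (Finset.mem_univ (s, a))

lemma supNorm_nonneg (Q : S → A → ℝ) : 0 ≤ supNorm Q :=
  le_trans (abs_nonneg _) (abs_le_supNorm Q Classical.ofNonempty Classical.ofNonempty)

lemma supNorm_le {Q : S → A → ℝ} {B : ℝ} (h : ∀ s a, |Q s a| ≤ B) : supNorm Q ≤ B :=
  Finset.sup'_le _ _ (fun p _ => h p.1 p.2)

lemma abs_maxQ_le (Q : S → A → ℝ) (s' : S) : |maxQ Q s'| ≤ supNorm Q := by
  rw [abs_le]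
  constructor
  · calc -supNorm Q ≤ Q s' Classical.ofNonempty := by
          have := abs_le_supNorm Q s' Classical.ofNonempty
          rw [abs_le] at this; linarith [this.1]
      _ ≤ maxQ Q s' := Finset.le_sup' _ (Finset.mem_univ _)
  · exact Finset.sup'_le _ _ fun a _ => le_trans (le_abs_self _) (abs_le_supNorm Q s' a)

lemma maxQ_sub_le (Q Q' : S → A → ℝ) (s' : S) :
    |maxQ Q s' - maxQ Q' s'| ≤ supNorm (fun s a => Q s a - Q' s a) := by
  set N := supNorm (fun s a => Q s a - Q' s a) with hN
  have key : ∀ (R R' : S → A → ℝ), supNorm (fun s a => R s a - R' s a) = N →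
      maxQ R s' - maxQ R' s' ≤ N := by
    intro R R' hRN
    rw [sub_le_iff_le_add]
    refine Finset.sup'_le _ _ fun a _ => ?_
    have h1 : R s' a - R' s' a ≤ N := by
      rw [← hRN]
      exact le_trans (le_abs_self _) (abs_le_supNorm (fun s a => R s a - R' s a) s' a)
    have h2 : R' s' a ≤ maxQ R' s' := Finset.le_sup' _ (Finset.mem_univ _)
    linarith
  have hsymm : supNorm (fun s a => Q' s a - Q s a) = N := by
    rw [hN]
    unfold supNorm
    have : (fun p : S × A => |Q' p.1 p.2 - Q p.1 p.2|) =
        (fun p : S × A => |Q p.1 p.2 - Q' p.1 p.2|) := funext fun p => abs_sub_comm _ _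
    rw [this]
  rw [abs_sub_le_iff]
  exact ⟨key Q Q' rfl, key Q' Q hsymm⟩

variable (P r : S → A → S → ℝ) (γ : ℝ)

lemma bellman_contraction (hγ0 : 0 ≤ γ) (hP0 : ∀ s a s', 0 ≤ P s a s')
    (hP1 : ∀ s a, ∑ s', P s a s' = 1) (Q Q' : S → A → ℝ) (s : S) (a : A) :
    |bellmanT P r γ Q s a - bellmanT P r γ Q' s a| ≤
      γ * supNorm (fun s a => Q s a - Q' s a) := by
  have hdiff : bellmanT P r γ Q s a - bellmanT P r γ Q' s a =
      ∑ s', P s a s' * (γ * (maxQ Q s' - maxQ Q' s')) := by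
    unfold bellmanT
    rw [← Finset.sum_sub_distrib]
    exact Finset.sum_congr rfl fun s' _ => by ring
  rw [hdiff]
  calc |∑ s', P s a s' * (γ * (maxQ Q s' - maxQ Q' s'))|
      ≤ ∑ s', |P s a s' * (γ * (maxQ Q s' - maxQ Q' s'))| := Finset.abs_sum_le_sum_abs _ _
    _ ≤ ∑ s', P s a s' * (γ * supNorm (fun s a => Q s a - Q' s a)) := by
        refine Finset.sum_le_sum fun s' _ => ?_
        rw [abs_mul, abs_mul, abs_of_nonneg (hP0 s a s'), abs_of_nonneg hγ0]
        exact mul_le_mul_of_nonneg_left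
          (mul_le_mul_of_nonneg_left (maxQ_sub_le Q Q' s') hγ0) (hP0 s a s')
    _ = γ * supNorm (fun s a => Q s a - Q' s a) := by
        rw [← Finset.sum_mul, hP1 s a, one_mul]

lemma bellman_abs_le (hγ0 : 0 ≤ γ) (hP0 : ∀ s a s', 0 ≤ P s a s')
    (hP1 : ∀ s a, ∑ s', P s a s' = 1) {Rm : ℝ} (hr : ∀ s a s', |r s a s'| ≤ Rm)
    (Q : S → A → ℝ) (s : S) (a : A) :
    |bellmanT P r γ Q s a| ≤ Rm + γ * supNorm Q := by
  unfold bellmanT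
  calc |∑ s', P s a s' * (r s a s' + γ * maxQ Q s')|
      ≤ ∑ s', |P s a s' * (r s a s' + γ * maxQ Q s')| := Finset.abs_sum_le_sum_abs _ _
    _ ≤ ∑ s', P s a s' * (Rm + γ * supNorm Q) := by
        refine Finset.sum_le_sum fun s' _ => ?_
        rw [abs_mul, abs_of_nonneg (hP0 s a s')]
        refine mul_le_mul_of_nonneg_left ?_ (hP0 s a s')
        calc |r s a s' + γ * maxQ Q s'| ≤ |r s a s'| + |γ * maxQ Q s'| := abs_add_le _ _
          _ ≤ Rm + γ * supNorm Q := by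
              refine add_le_add (hr s a s') ?_
              rw [abs_mul, abs_of_nonneg hγ0]
              exact mul_le_mul_of_nonneg_left (abs_maxQ_le Q s') hγ0
    _ = Rm + γ * supNorm Q := by rw [← Finset.sum_mul, hP1 s a, one_mul]

end Det

section Seq

/-- products of `(1 - a k)` tend to zero when `∑ a k = ∞`. -/
lemma prod_tendsto_zero (a : ℕ → ℝ) (K : ℕ) (h01 : ∀ k, K ≤ k → 0 ≤ a k ∧ a k ≤ 1)
    (hdiv : Tendsto (fun n => ∑ k ∈ Finset.range n, a k) atTop atTop) :
    Tendsto (fun n => ∏ k ∈ Finset.Ico K n, (1 - a k)) atTop (nhds 0) := by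
  have hg : Tendsto (fun n => Real.exp (∑ k ∈ Finset.range K, a k) *
      Real.exp (-(∑ k ∈ Finset.range n, a k))) atTop (nhds 0) := by
    have h1 : Tendsto (fun n => -(∑ k ∈ Finset.range n, a k)) atTop atBot :=
      tendsto_neg_atTop_atBot.comp hdiv
    have h2 : Tendsto (fun n => Real.exp (-(∑ k ∈ Finset.range n, a k))) atTop (nhds 0) :=
      Real.tendsto_exp_atBot.comp h1
    simpa using h2.const_mul (Real.exp (∑ k ∈ Finset.range K, a k))
  refine tendsto_of_tendsto_of_tendsto_of_le_of_le' tendsto_const_nhds hg ?_ ?_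
  · exact Eventually.of_forall fun n => Finset.prod_nonneg fun k hk =>
      sub_nonneg.2 (h01 k (Finset.mem_Ico.1 hk).1).2
  · filter_upwards [eventually_ge_atTop K] with n hn
    calc ∏ k ∈ Finset.Ico K n, (1 - a k)
        ≤ ∏ k ∈ Finset.Ico K n, Real.exp (-(a k)) := by
          refine Finset.prod_le_prod (fun k hk => sub_nonneg.2 (h01 k (Finset.mem_Ico.1 hk).1).2)
            (fun k hk => ?_)
          have := Real.add_one_le_exp (-(a k))
          linarith
      _ = Real.exp (∑ k ∈ Finset.Ico K n, -(a k)) := (Real.exp_sum _ _).symm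
      _ = Real.exp (∑ k ∈ Finset.range K, a k) * Real.exp (-(∑ k ∈ Finset.range n, a k)) := by
          rw [← Real.exp_add]
          congr 1
          rw [Finset.sum_neg_distrib, Finset.sum_Ico_eq_sub _ hn]
          ring

/-- eventual bound for the scalar recursion `u (k+1) ≤ (1 - a k) * u k + a k * c`. -/
lemma eventually_le_of_recursion (a : ℕ → ℝ) (K : ℕ) (h01 : ∀ k, K ≤ k → 0 ≤ a k ∧ a k ≤ 1)
    (hdiv : Tendsto (fun n => ∑ k ∈ Finset.range n, a k) atTop atTop)
    (u : ℕ → ℝ) (c : ℝ) (hrec : ∀ k, K ≤ k → u (k + 1) ≤ (1 - a k) * u k + a k * c)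
    (ε : ℝ) (hε : 0 < ε) : ∀ᶠ n in atTop, u n ≤ c + ε := by
  set V := max (u K - c) 0 with hV
  have hV0 : 0 ≤ V := le_max_right _ _
  have key : ∀ n, K ≤ n → u n ≤ c + (∏ k ∈ Finset.Ico K n, (1 - a k)) * V := by
    intro n hn
    induction n, hn using Nat.le_induction with
    | base => simp [hV]; cases le_or_gt (u K - c) 0 with
        | inl h => simp [max_eq_right h]; linarith
        | inr h => rw [max_eq_left h.le]; linarith
    | succ n hn ih =>
      have hP0 : 0 ≤ ∏ k ∈ Finset.Ico K n, (1 - a k) :=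
        Finset.prod_nonneg fun k hk => sub_nonneg.2 (h01 k (Finset.mem_Ico.1 hk).1).2
      have h1an : 0 ≤ 1 - a n := sub_nonneg.2 (h01 n hn).2
      calc u (n + 1) ≤ (1 - a n) * u n + a n * c := hrec n hn
        _ ≤ (1 - a n) * (c + (∏ k ∈ Finset.Ico K n, (1 - a k)) * V) + a n * c :=
            add_le_add_left (mul_le_mul_of_nonneg_left ih h1an) _
        _ = c + ((∏ k ∈ Finset.Ico K n, (1 - a k)) * (1 - a n)) * V := by ring
        _ = c + (∏ k ∈ Finset.Ico K (n + 1), (1 - a k)) * V := by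
            rw [Finset.prod_Ico_succ_top hn]
  have hPV : Tendsto (fun n => (∏ k ∈ Finset.Ico K n, (1 - a k)) * V) atTop (nhds 0) := by
    simpa using (prod_tendsto_zero a K h01 hdiv).mul_const V
  have hev : ∀ᶠ n in atTop, (∏ k ∈ Finset.Ico K n, (1 - a k)) * V < ε :=
    hPV.eventually_lt_const hε
  filter_upwards [hev, eventually_ge_atTop K] with n h1 h2
  linarith [key n h2]

/-- the noise accumulator tends to zero. -/
lemma tendsto_zero_of_noise (a η : ℕ → ℝ) (h01 : ∀ k, 0 ≤ a k ∧ a k ≤ 1)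
    (hdiv : Tendsto (fun n => ∑ k ∈ Finset.range n, a k) atTop atTop)
    (hcauchy : CauchySeq (fun n => ∑ k ∈ Finset.range n, a k * η k))
    (w : ℕ → ℝ) (hwrec : ∀ k, w (k + 1) = (1 - a k) * w k + a k * η k) :
    Tendsto w atTop (nhds 0) := by
  rw [Metric.tendsto_atTop]
  intro ε hε
  have hε4 : 0 < ε / 4 := by linarith
  obtain ⟨N, hN⟩ := Metric.cauchySeq_iff'.1 hcauchy (ε / 4) hε4
  set Sp : ℕ → ℝ := fun n => ∑ k ∈ Finset.range n, a k * η k with hSp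
  set T : ℕ → ℝ := fun n => Sp n - Sp N with hT
  have hTbd : ∀ n, N ≤ n → |T n| ≤ ε / 4 := by
    intro n hn
    have := hN n hn
    rw [Real.dist_eq] at this
    exact le_of_lt this
  set z : ℕ → ℝ := fun n => w n - T n with hz
  have hzrec : ∀ k, N ≤ k → |z (k + 1)| ≤ (1 - a k) * |z k| + a k * (ε / 4) := by
    intro k hk
    have hTk : T (k + 1) = T k + a k * η k := by
      simp only [hT, hSp, Finset.sum_range_succ]; ring
    have hzid : z (k + 1) = (1 - a k) * z k - a k * T k := by
      simp only [hz, hwrec k, hTk]; ring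
    rw [hzid]
    calc |(1 - a k) * z k - a k * T k| ≤ |(1 - a k) * z k| + |a k * T k| := abs_sub _ _
      _ ≤ (1 - a k) * |z k| + a k * (ε / 4) := by
          rw [abs_mul, abs_mul, abs_of_nonneg (sub_nonneg.2 (h01 k).2),
            abs_of_nonneg (h01 k).1]
          exact add_le_add_right (mul_le_mul_of_nonneg_left (hTbd k hk) (h01 k).1) _
  have hzev : ∀ᶠ n in atTop, |z n| ≤ ε / 4 + ε / 4 :=
    eventually_le_of_recursion a N (fun k _ => h01 k) hdiv (fun n => |z n|) (ε / 4)
      hzrec (ε / 4) hε4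
  have : ∀ᶠ n in atTop, dist (w n) 0 < ε := by
    filter_upwards [hzev, eventually_ge_atTop N] with n h1 h2
    rw [Real.dist_eq, sub_zero]
    have : w n = z n + T n := by simp [hz]
    rw [this]
    calc |z n + T n| ≤ |z n| + |T n| := abs_add_le _ _
      _ ≤ (ε / 4 + ε / 4) + ε / 4 := add_le_add h1 (hTbd n h2)
      _ < ε := by linarith
  exact eventually_atTop.1 this

end Seq


section Path

variable {S A : Type*} [Fintype S] [Fintype A] [Nonempty S] [Nonempty A]
  [DecidableEq S] [DecidableEq A]

lemma qbounded (P r : S → A → S → ℝ) (γ : ℝ) (hγ0 : 0 ≤ γ) (hγ1 : γ < 1)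
    (β : ℝ) (hβ : 0 < β)
    (α : ℕ → ℝ) (hα01 : ∀ k, 0 ≤ α k ∧ α k ≤ 1)
    (K₀ : ℕ) (hK₀ : ∀ k, K₀ ≤ k → α k * β ≤ 1)
    (R' : ℝ) (hR'0 : 0 ≤ R') (hr : ∀ s a s', |r s a s'| ≤ (1 - γ) * R')
    (x : ℕ → S × A × S) (qa qb : ℕ → S → A → ℝ)
    (hqa : ∀ k s a, qa (k + 1) s a = qa k s a +
      α k * (if s = (x k).1 ∧ a = (x k).2.1 then
          r (x k).1 (x k).2.1 (x k).2.2 + γ * maxQ (qb k) (x k).2.2 -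
            qa k (x k).1 (x k).2.1 else 0))
    (hqb : ∀ k s a, qb (k + 1) s a = qb k s a +
      α k * β * (if s = (x k).1 ∧ a = (x k).2.1 then
          qa k (x k).1 (x k).2.1 - qb k (x k).1 (x k).2.1 else 0)) :
    ∀ k, max (supNorm (qa k)) (supNorm (qb k)) ≤
      (max (max (supNorm (qa 0)) (supNorm (qb 0))) R') *
        ∏ j ∈ Finset.range K₀, (1 + 2 * (α j * β)) := by
  set m : ℕ → ℝ := fun k => max (max (supNorm (qa k)) (supNorm (qb k))) R' with hm
  have hm0 : ∀ k, 0 ≤ m k := fun k => le_trans hR'0 (le_max_right _ _)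
  have hRm : ∀ k, R' ≤ m k := fun k => le_max_right _ _
  have hAm : ∀ k, supNorm (qa k) ≤ m k := fun k =>
    le_trans (le_max_left _ _) (le_max_left _ _)
  have hBm : ∀ k, supNorm (qb k) ≤ m k := fun k =>
    le_trans (le_max_right _ _) (le_max_left _ _)
  -- one-step bounds
  have hA : ∀ k, supNorm (qa (k + 1)) ≤ m k := by
    intro k
    refine supNorm_le fun s a => ?_
    rw [hqa k s a]
    by_cases h : s = (x k).1 ∧ a = (x k).2.1
    · obtain ⟨hs, ha⟩ := h
      rw [if_pos ⟨hs, ha⟩, ← hs, ← ha]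
      have hq : |qa k s a| ≤ m k := le_trans (abs_le_supNorm _ s a) (hAm k)
      have hw : |r s a (x k).2.2 + γ * maxQ (qb k) (x k).2.2| ≤ m k := by
        calc |r s a (x k).2.2 + γ * maxQ (qb k) (x k).2.2|
            ≤ |r s a (x k).2.2| + γ * |maxQ (qb k) (x k).2.2| := by
              refine le_trans (abs_add_le _ _) (add_le_add_right ?_ _)
              rw [abs_mul, abs_of_nonneg hγ0]
          _ ≤ (1 - γ) * R' + γ * supNorm (qb k) := by
              refine add_le_add (hr _ _ _) (mul_le_mul_of_nonneg_left (abs_maxQ_le _ _) hγ0)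
          _ ≤ (1 - γ) * m k + γ * m k := by
              refine add_le_add (mul_le_mul_of_nonneg_left (hRm k) (by linarith)) 
                (mul_le_mul_of_nonneg_left (hBm k) hγ0)
          _ = m k := by ring
      have h1 : qa k s a + α k * (r s a (x k).2.2 + γ * maxQ (qb k) (x k).2.2 - qa k s a)
          = (1 - α k) * qa k s a + α k * (r s a (x k).2.2 + γ * maxQ (qb k) (x k).2.2) := by
        ring
      rw [h1]
      calc |(1 - α k) * qa k s a + α k * (r s a (x k).2.2 + γ * maxQ (qb k) (x k).2.2)|
          ≤ (1 - α k) * |qa k s a| + α k * |r s a (x k).2.2 + γ * maxQ (qb k) (x k).2.2| := by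
            refine le_trans (abs_add_le _ _) ?_
            rw [abs_mul, abs_mul, abs_of_nonneg (sub_nonneg.2 (hα01 k).2),
              abs_of_nonneg (hα01 k).1]
        _ ≤ (1 - α k) * m k + α k * m k := add_le_add
            (mul_le_mul_of_nonneg_left hq (sub_nonneg.2 (hα01 k).2))
            (mul_le_mul_of_nonneg_left hw (hα01 k).1)
        _ = m k := by ring
    · rw [if_neg h, mul_zero, add_zero]
      exact le_trans (abs_le_supNorm _ s a) (hAm k)
  have hB1 : ∀ k, α k * β ≤ 1 → supNorm (qb (k + 1)) ≤ m k := by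
    intro k hk
    have hab0 : 0 ≤ α k * β := mul_nonneg (hα01 k).1 hβ.le
    refine supNorm_le fun s a => ?_
    rw [hqb k s a]
    by_cases h : s = (x k).1 ∧ a = (x k).2.1
    · obtain ⟨hs, ha⟩ := h
      rw [if_pos ⟨hs, ha⟩, ← hs, ← ha]
      have h1 : qb k s a + α k * β * (qa k s a - qb k s a)
          = (1 - α k * β) * qb k s a + (α k * β) * qa k s a := by ring
      rw [h1]
      calc |(1 - α k * β) * qb k s a + (α k * β) * qa k s a|
          ≤ (1 - α k * β) * |qb k s a| + (α k * β) * |qa k s a| := by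
            refine le_trans (abs_add_le _ _) ?_
            rw [abs_mul, abs_mul, abs_of_nonneg (sub_nonneg.2 hk), abs_of_nonneg hab0]
        _ ≤ (1 - α k * β) * m k + (α k * β) * m k := add_le_add
            (mul_le_mul_of_nonneg_left (le_trans (abs_le_supNorm _ s a) (hBm k))
              (sub_nonneg.2 hk))
            (mul_le_mul_of_nonneg_left (le_trans (abs_le_supNorm _ s a) (hAm k)) hab0)
        _ = m k := by ring
    · rw [if_neg h, mul_zero, add_zero]
      exact le_trans (abs_le_supNorm _ s a) (hBm k)
  have hB2 : ∀ k, supNorm (qb (k + 1)) ≤ (1 + 2 * (α k * β)) * m k := by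
    intro k
    have hab0 : 0 ≤ α k * β := mul_nonneg (hα01 k).1 hβ.le
    refine supNorm_le fun s a => ?_
    rw [hqb k s a]
    by_cases h : s = (x k).1 ∧ a = (x k).2.1
    · obtain ⟨hs, ha⟩ := h
      rw [if_pos ⟨hs, ha⟩, ← hs, ← ha]
      calc |qb k s a + α k * β * (qa k s a - qb k s a)|
          ≤ |qb k s a| + (α k * β) * (|qa k s a| + |qb k s a|) := by
            refine le_trans (abs_add_le _ _) (add_le_add_right ?_ _)
            rw [abs_mul, abs_of_nonneg hab0]
            exact mul_le_mul_of_nonneg_left (abs_sub _ _) hab0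
        _ ≤ m k + (α k * β) * (m k + m k) := add_le_add
            (le_trans (abs_le_supNorm _ s a) (hBm k))
            (mul_le_mul_of_nonneg_left (add_le_add
              (le_trans (abs_le_supNorm _ s a) (hAm k))
              (le_trans (abs_le_supNorm _ s a) (hBm k))) hab0)
        _ = (1 + 2 * (α k * β)) * m k := by ring
    · rw [if_neg h, mul_zero, add_zero]
      have : supNorm (qb k) ≤ m k := hBm k
      nlinarith [abs_le_supNorm (qb k) s a, hm0 k]
  have hmono : ∀ k, K₀ ≤ k → m (k + 1) ≤ m k := by
    intro k hk
    exact max_le (max_le (hA k) (hB1 k (hK₀ k hk))) (hRm k)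
  have hgrow : ∀ k, m (k + 1) ≤ (1 + 2 * (α k * β)) * m k := by
    intro k
    have hfac : 1 ≤ 1 + 2 * (α k * β) := by nlinarith [(hα01 k).1, hβ.le]
    refine max_le (max_le ?_ (hB2 k)) ?_
    · exact le_trans (hA k) (le_mul_of_one_le_left (hm0 k) hfac)
    · exact le_trans (hRm k) (le_mul_of_one_le_left (hm0 k) hfac)
  have claim : ∀ k, m k ≤ m 0 * ∏ j ∈ Finset.range (min k K₀), (1 + 2 * (α j * β)) := by
    intro k
    induction k with
    | zero => simp
    | succ k ih =>
      rcases lt_or_ge k K₀ with hlt | hge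
      · have h1 : min (k + 1) K₀ = k + 1 := min_eq_left hlt
        have h2 : min k K₀ = k := min_eq_left hlt.le
        rw [h1, Finset.prod_range_succ]
        rw [h2] at ih
        calc m (k + 1) ≤ (1 + 2 * (α k * β)) * m k := hgrow k
          _ ≤ (1 + 2 * (α k * β)) *
              (m 0 * ∏ j ∈ Finset.range k, (1 + 2 * (α j * β))) := by
              refine mul_le_mul_of_nonneg_left ih ?_
              nlinarith [(hα01 k).1, hβ.le]
          _ = m 0 * ((∏ j ∈ Finset.range k, (1 + 2 * (α j * β))) * (1 + 2 * (α k * β))) := by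
              ring
      · have h1 : min (k + 1) K₀ = K₀ := min_eq_right (le_trans hge (Nat.le_succ k))
        have h2 : min k K₀ = K₀ := min_eq_right hge
        rw [h1]
        rw [h2] at ih
        exact le_trans (hmono k hge) ih
  intro k
  have hmk : max (supNorm (qa k)) (supNorm (qb k)) ≤ m k := le_max_left _ _
  refine le_trans hmk (le_trans (claim k) ?_)
  refine mul_le_mul_of_nonneg_left ?_ (hm0 0)
  have hone : ∀ j, (1:ℝ) ≤ 1 + 2 * (α j * β) := fun j => by nlinarith [(hα01 j).1, hβ.le]
  have hsplit : (∏ j ∈ Finset.range (min k K₀), (1 + 2 * (α j * β))) *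
      ∏ j ∈ Finset.Ico (min k K₀) K₀, (1 + 2 * (α j * β)) =
      ∏ j ∈ Finset.range K₀, (1 + 2 * (α j * β)) :=
    Finset.prod_range_mul_prod_Ico _ (min_le_right _ _)
  rw [← hsplit]
  refine le_mul_of_one_le_right (Finset.prod_nonneg fun j _ => by nlinarith [hone j]) ?_
  calc (1:ℝ) = ∏ _j ∈ Finset.Ico (min k K₀) K₀, (1:ℝ) := by rw [Finset.prod_const_one]
    _ ≤ ∏ j ∈ Finset.Ico (min k K₀) K₀, (1 + 2 * (α j * β)) :=
      Finset.prod_le_prod (fun j _ => zero_le_one) (fun j _ => hone j)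

end Path

section Pathwise

variable {S A : Type*} [Fintype S] [Fintype A] [Nonempty S] [Nonempty A]
  [DecidableEq S] [DecidableEq A]

/-- indicator of a visit to `(s, a)` at time `k` -/
noncomputable def chi (x : ℕ → S × A × S) (k : ℕ) (s : S) (a : A) : ℝ :=
  if s = (x k).1 ∧ a = (x k).2.1 then 1 else 0

/-- noise term -/
noncomputable def zeta (P r : S → A → S → ℝ) (γ : ℝ) (x : ℕ → S × A × S)
    (qb : ℕ → S → A → ℝ) (k : ℕ) (s : S) (a : A) : ℝ :=
  r s a (x k).2.2 + γ * maxQ (qb k) (x k).2.2 - bellmanT P r γ (qb k) s a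

end Pathwise

/-- noise accumulator process -/
noncomputable def Wproc (a η : ℕ → ℝ) : ℕ → ℝ
  | 0 => 0
  | (k + 1) => (1 - a k) * Wproc a η k + a k * η k

lemma Wproc_succ (a η : ℕ → ℝ) (k : ℕ) :
    Wproc a η (k + 1) = (1 - a k) * Wproc a η k + a k * η k := by
  simp [Wproc]

section Pathwise2

variable {S A : Type*} [Fintype S] [Fintype A] [Nonempty S] [Nonempty A]
  [DecidableEq S] [DecidableEq A]

lemma pathwise (P r : S → A → S → ℝ) (γ : ℝ) (hγ0 : 0 ≤ γ) (hγ1 : γ < 1)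
    (hP0 : ∀ s a s', 0 ≤ P s a s') (hP1 : ∀ s a, ∑ s', P s a s' = 1)
    (Qstar : S → A → ℝ) (hQstar : bellmanT P r γ Qstar = Qstar)
    (β : ℝ) (hβ : 0 < β)
    (α : ℕ → ℝ) (hα01 : ∀ k, 0 ≤ α k ∧ α k ≤ 1)
    (K₀ : ℕ) (hK₀ : ∀ k, K₀ ≤ k → α k * β ≤ 1)
    (x : ℕ → S × A × S) (qa qb : ℕ → S → A → ℝ)
    (hqa : ∀ k s a, qa (k + 1) s a = qa k s a +
      α k * (if s = (x k).1 ∧ a = (x k).2.1 then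
          r (x k).1 (x k).2.1 (x k).2.2 + γ * maxQ (qb k) (x k).2.2 -
            qa k (x k).1 (x k).2.1 else 0))
    (hqb : ∀ k s a, qb (k + 1) s a = qb k s a +
      α k * β * (if s = (x k).1 ∧ a = (x k).2.1 then
          qa k (x k).1 (x k).2.1 - qb k (x k).1 (x k).2.1 else 0))
    (hdiv : ∀ s a, Tendsto (fun n => ∑ k ∈ Finset.range n, α k * chi x k s a) atTop atTop)
    (hnoise : ∀ s a, CauchySeq (fun n => ∑ k ∈ Finset.range n,
        (α k * chi x k s a) * zeta P r γ x qb k s a)) :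
    ∀ s a, Tendsto (fun k => qa k s a) atTop (nhds (Qstar s a)) ∧
      Tendsto (fun k => qb k s a) atTop (nhds (Qstar s a)) := by
  have hχ01 : ∀ k s a, 0 ≤ chi x k s a ∧ chi x k s a ≤ 1 := by
    intro k s a
    unfold chi
    split <;> norm_num
  have ha01 : ∀ s a k, 0 ≤ α k * chi x k s a ∧ α k * chi x k s a ≤ 1 := by
    intro s a k
    constructor
    · exact mul_nonneg (hα01 k).1 (hχ01 k s a).1
    · calc α k * chi x k s a ≤ 1 * 1 :=
          mul_le_mul (hα01 k).2 (hχ01 k s a).2 (hχ01 k s a).1 zero_le_one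
        _ = 1 := one_mul 1
  -- clean recursions
  have hRA : ∀ k s a, qa (k + 1) s a = qa k s a + (α k * chi x k s a) *
      (zeta P r γ x qb k s a + bellmanT P r γ (qb k) s a - qa k s a) := by
    intro k s a
    by_cases h : s = (x k).1 ∧ a = (x k).2.1
    · obtain ⟨hs, ha⟩ := h
      rw [hqa k s a, if_pos ⟨hs, ha⟩]
      unfold chi zeta
      rw [if_pos ⟨hs, ha⟩, ← hs, ← ha]
      ring
    · rw [hqa k s a, if_neg h]
      unfold chi
      rw [if_neg h]
      ring
  have hRB : ∀ k s a, qb (k + 1) s a = qb k s a + (α k * β * chi x k s a) *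
      (qa k s a - qb k s a) := by
    intro k s a
    by_cases h : s = (x k).1 ∧ a = (x k).2.1
    · obtain ⟨hs, ha⟩ := h
      rw [hqb k s a, if_pos ⟨hs, ha⟩]
      unfold chi
      rw [if_pos ⟨hs, ha⟩, ← hs, ← ha]
      ring
    · rw [hqb k s a, if_neg h]
      unfold chi
      rw [if_neg h]
      ring
  -- uniform boundedness
  set Rm : ℝ := (Finset.univ : Finset (S × A × S)).sup' Finset.univ_nonempty
    (fun t => |r t.1 t.2.1 t.2.2|) with hRmdef
  have hRmr : ∀ s a s', |r s a s'| ≤ Rm := fun s a s' =>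
    Finset.le_sup' (f := fun t : S × A × S => |r t.1 t.2.1 t.2.2|) (Finset.mem_univ (s, a, s'))
  have hRm0 : 0 ≤ Rm :=
    le_trans (abs_nonneg _)
      (hRmr Classical.ofNonempty Classical.ofNonempty Classical.ofNonempty)
  set R' : ℝ := max (Rm / (1 - γ)) 0 with hR'def
  have hR'0 : 0 ≤ R' := le_max_right _ _
  have hrR' : ∀ s a s', |r s a s'| ≤ (1 - γ) * R' := by
    intro s a s'
    refine le_trans (hRmr s a s') ?_
    have h1γ : 0 < 1 - γ := by linarith
    calc Rm = (1 - γ) * (Rm / (1 - γ)) := by field_simp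
      _ ≤ (1 - γ) * R' := mul_le_mul_of_nonneg_left (le_max_left _ _) h1γ.le
  set M : ℝ := (max (max (supNorm (qa 0)) (supNorm (qb 0))) R') *
    ∏ j ∈ Finset.range K₀, (1 + 2 * (α j * β)) with hMdef
  have hbound : ∀ k, max (supNorm (qa k)) (supNorm (qb k)) ≤ M :=
    qbounded P r γ hγ0 hγ1 β hβ α hα01 K₀ hK₀ R' hR'0 hrR' x qa qb hqa hqb
  set EA : ℕ → ℝ := fun k => supNorm (fun s a => qa k s a - Qstar s a) with hEAdef
  set EB : ℕ → ℝ := fun k => supNorm (fun s a => qb k s a - Qstar s a) with hEBdef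
  set D : ℝ := M + supNorm Qstar with hDdef
  have hEAD : ∀ k, EA k ≤ D := by
    intro k
    refine supNorm_le fun s a => ?_
    calc |qa k s a - Qstar s a| ≤ |qa k s a| + |Qstar s a| := abs_sub _ _
      _ ≤ M + supNorm Qstar := add_le_add
          (le_trans (abs_le_supNorm _ s a) (le_trans (le_max_left _ _) (hbound k)))
          (abs_le_supNorm _ s a)
  have hEBD : ∀ k, EB k ≤ D := by
    intro k
    refine supNorm_le fun s a => ?_
    calc |qb k s a - Qstar s a| ≤ |qb k s a| + |Qstar s a| := abs_sub _ _
      _ ≤ M + supNorm Qstar := add_le_add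
          (le_trans (abs_le_supNorm _ s a) (le_trans (le_max_right _ _) (hbound k)))
          (abs_le_supNorm _ s a)
  -- noise accumulators
  set W : S → A → ℕ → ℝ := fun s a => Wproc (fun k => α k * chi x k s a)
    (fun k => zeta P r γ x qb k s a) with hWdef
  have hW : ∀ s a, Tendsto (W s a) atTop (nhds 0) := by
    intro s a
    exact tendsto_zero_of_noise _ _ (ha01 s a) (hdiv s a) (hnoise s a) _
      (fun k => Wproc_succ _ _ k)
  -- contraction estimate
  have hcontr : ∀ k s a, |bellmanT P r γ (qb k) s a - Qstar s a| ≤ γ * EB k := by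
    intro k s a
    have h0 : Qstar s a = bellmanT P r γ Qstar s a := by rw [hQstar]
    rw [h0]
    exact bellman_contraction P r γ hγ0 hP0 hP1 (qb k) Qstar s a
  -- main identity
  have hid : ∀ s a k, qa (k + 1) s a - Qstar s a - W s a (k + 1) =
      (1 - α k * chi x k s a) * (qa k s a - Qstar s a - W s a k) +
        (α k * chi x k s a) * (bellmanT P r γ (qb k) s a - Qstar s a) := by
    intro s a k
    rw [hRA k s a]
    show _ - _ - Wproc _ _ (k + 1) = _
    rw [Wproc_succ]
    ring
  -- Step A
  have stepA : ∀ c ε, 0 < ε → (∀ᶠ k in atTop, EB k ≤ c) →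
      ∀ᶠ k in atTop, EA k ≤ γ * c + ε := by
    intro c ε hε hev
    obtain ⟨K, hK⟩ := eventually_atTop.1 hev
    have key : ∀ p : S × A, ∀ᶠ k in atTop,
        |qa k p.1 p.2 - Qstar p.1 p.2| ≤ γ * c + ε := by
      rintro ⟨s, a⟩
      have hrec : ∀ k, K ≤ k →
          |qa (k + 1) s a - Qstar s a - W s a (k + 1)| ≤
            (1 - α k * chi x k s a) * |qa k s a - Qstar s a - W s a k| +
              (α k * chi x k s a) * (γ * c) := by
        intro k hk
        rw [hid s a k]
        refine le_trans (abs_add_le _ _) ?_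
        rw [abs_mul, abs_mul, abs_of_nonneg (sub_nonneg.2 (ha01 s a k).2),
          abs_of_nonneg (ha01 s a k).1]
        refine add_le_add_right (mul_le_mul_of_nonneg_left ?_ (ha01 s a k).1) _
        refine le_trans (hcontr k s a) ?_
        exact mul_le_mul_of_nonneg_left (hK k hk) hγ0
      have h1 : ∀ᶠ k in atTop, |qa k s a - Qstar s a - W s a k| ≤ γ * c + ε / 2 :=
        eventually_le_of_recursion _ K (fun k _ => ha01 s a k) (hdiv s a)
          (fun k => |qa k s a - Qstar s a - W s a k|) (γ * c) hrec (ε / 2) (by linarith)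
      have h2 : ∀ᶠ k in atTop, |W s a k| < ε / 2 := by
        have := (hW s a).abs
        rw [abs_zero] at this
        exact this.eventually_lt_const (by linarith)
      filter_upwards [h1, h2] with k hk1 hk2
      calc |qa k s a - Qstar s a| ≤ |qa k s a - Qstar s a - W s a k| + |W s a k| := by
            simpa using abs_add_le (qa k s a - Qstar s a - W s a k) (W s a k)
        _ ≤ (γ * c + ε / 2) + ε / 2 := add_le_add hk1 hk2.le
        _ = γ * c + ε := by ring
    have hall : ∀ᶠ k in atTop, ∀ p : S × A, |qa k p.1 p.2 - Qstar p.1 p.2| ≤ γ * c + ε :=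
      eventually_all.2 key
    filter_upwards [hall] with k hk
    exact supNorm_le fun s a => hk (s, a)
  -- Step B
  have stepB : ∀ c ε, 0 < ε → (∀ᶠ k in atTop, EA k ≤ c) →
      ∀ᶠ k in atTop, EB k ≤ c + ε := by
    intro c ε hε hev
    obtain ⟨K, hK⟩ := eventually_atTop.1 hev
    have key : ∀ p : S × A, ∀ᶠ k in atTop,
        |qb k p.1 p.2 - Qstar p.1 p.2| ≤ c + ε := by
      rintro ⟨s, a⟩
      set b : ℕ → ℝ := fun k => α k * β * chi x k s a with hbdef
      have hb01 : ∀ k, max K K₀ ≤ k → 0 ≤ b k ∧ b k ≤ 1 := by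
        intro k hk
        have hk0 : K₀ ≤ k := le_trans (le_max_right _ _) hk
        constructor
        · exact mul_nonneg (mul_nonneg (hα01 k).1 hβ.le) (hχ01 k s a).1
        · calc b k ≤ 1 * 1 := mul_le_mul (hK₀ k hk0) (hχ01 k s a).2 (hχ01 k s a).1 zero_le_one
            _ = 1 := one_mul 1
      have hbdiv : Tendsto (fun n => ∑ k ∈ Finset.range n, b k) atTop atTop := by
        have heq : ∀ n, ∑ k ∈ Finset.range n, b k =
            β * ∑ k ∈ Finset.range n, α k * chi x k s a := by
          intro n
          rw [Finset.mul_sum]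
          exact Finset.sum_congr rfl fun k _ => by rw [hbdef]; ring
        simp only [heq]
        exact (hdiv s a).const_mul_atTop hβ
      have hrec : ∀ k, max K K₀ ≤ k →
          |qb (k + 1) s a - Qstar s a| ≤ (1 - b k) * |qb k s a - Qstar s a| + b k * c := by
        intro k hk
        have hkK : K ≤ k := le_trans (le_max_left _ _) hk
        have hid2 : qb (k + 1) s a - Qstar s a =
            (1 - b k) * (qb k s a - Qstar s a) + b k * (qa k s a - Qstar s a) := by
          rw [hRB k s a, hbdef]
          ring
        rw [hid2]
        refine le_trans (abs_add_le _ _) ?_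
        rw [abs_mul, abs_mul, abs_of_nonneg (sub_nonneg.2 (hb01 k hk).2),
          abs_of_nonneg (hb01 k hk).1]
        refine add_le_add_right (mul_le_mul_of_nonneg_left ?_ (hb01 k hk).1) _
        exact le_trans (abs_le_supNorm (fun s a => qa k s a - Qstar s a) s a) (hK k hkK)
      exact eventually_le_of_recursion b (max K K₀) hb01 hbdiv
        (fun k => |qb k s a - Qstar s a|) c hrec ε hε
    have hall : ∀ᶠ k in atTop, ∀ p : S × A, |qb k p.1 p.2 - Qstar p.1 p.2| ≤ c + ε :=
      eventually_all.2 key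
    filter_upwards [hall] with k hk
    exact supNorm_le fun s a => hk (s, a)
  -- iteration
  have iter : ∀ c, (∀ ε, 0 < ε → ∀ᶠ k in atTop, max (EA k) (EB k) ≤ c + ε) →
      ∀ ε, 0 < ε → ∀ᶠ k in atTop, max (EA k) (EB k) ≤ γ * c + ε := by
    intro c hc ε hε
    have hε3 : 0 < ε / 3 := by linarith
    have h1 : ∀ᶠ k in atTop, EB k ≤ c + ε / 3 :=
      (hc (ε / 3) hε3).mono fun k hk => le_trans (le_max_right _ _) hk
    have h2 : ∀ᶠ k in atTop, EA k ≤ γ * (c + ε / 3) + ε / 3 := stepA (c + ε / 3) (ε / 3) hε3 h1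
    have h3 : ∀ᶠ k in atTop, EB k ≤ (γ * (c + ε / 3) + ε / 3) + ε / 3 :=
      stepB _ (ε / 3) hε3 h2
    filter_upwards [h2, h3] with k hk2 hk3
    have hγε : γ * (ε / 3) ≤ ε / 3 := by nlinarith
    refine max_le (le_trans hk2 ?_) (le_trans hk3 ?_) <;> nlinarith
  have main : ∀ n, ∀ ε, 0 < ε → ∀ᶠ k in atTop, max (EA k) (EB k) ≤ γ ^ n * D + ε := by
    intro n
    induction n with
    | zero =>
      intro ε hε
      refine Eventually.of_forall fun k => ?_
      have := max_le (hEAD k) (hEBD k)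
      rw [pow_zero, one_mul]
      linarith
    | succ n ih =>
      intro ε hε
      have := iter (γ ^ n * D) ih ε hε
      have heq : γ * (γ ^ n * D) = γ ^ (n + 1) * D := by ring
      rwa [heq] at this
  have final : ∀ ε, 0 < ε → ∀ᶠ k in atTop, max (EA k) (EB k) < ε := by
    intro ε hε
    have hpow : Tendsto (fun n => γ ^ n * D) atTop (nhds 0) := by
      simpa using (tendsto_pow_atTop_nhds_zero_of_lt_one hγ0 hγ1).mul_const D
    obtain ⟨n, hn⟩ := (hpow.eventually_lt_const (show (0:ℝ) < ε / 2 by linarith)).exists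
    filter_upwards [main n (ε / 4) (by linarith)] with k hk
    calc max (EA k) (EB k) ≤ γ ^ n * D + ε / 4 := hk
      _ < ε / 2 + ε / 4 := by linarith
      _ < ε := by linarith
  intro s a
  constructor
  · rw [Metric.tendsto_atTop]
    intro ε hε
    obtain ⟨N, hN⟩ := eventually_atTop.1 (final ε hε)
    refine ⟨N, fun n hn => ?_⟩
    rw [Real.dist_eq]
    calc |qa n s a - Qstar s a| ≤ EA n :=
        abs_le_supNorm (fun s a => qa n s a - Qstar s a) s a
      _ ≤ max (EA n) (EB n) := le_max_left _ _
      _ < ε := hN n hn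
  · rw [Metric.tendsto_atTop]
    intro ε hε
    obtain ⟨N, hN⟩ := eventually_atTop.1 (final ε hε)
    refine ⟨N, fun n hn => ?_⟩
    rw [Real.dist_eq]
    calc |qb n s a - Qstar s a| ≤ EB n :=
        abs_le_supNorm (fun s a => qb n s a - Qstar s a) s a
      _ ≤ max (EA n) (EB n) := le_max_right _ _
      _ < ε := hN n hn

end Pathwise2

section Prob

variable {Ω : Type*} {m0 : MeasurableSpace Ω}

/-- The filtration of the strict past of a process. -/
def filtOf {E : Type*} [MeasurableSpace E] (X : ℕ → Ω → E)
    (hX : ∀ k, Measurable (X k)) : MeasureTheory.Filtration ℕ m0 where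
  seq n := ⨆ i ∈ Set.Iio n, MeasurableSpace.comap (X i) inferInstance
  mono' := fun n m hnm => by
    refine iSup_le fun i => iSup_le fun hi => ?_
    exact le_iSup₂ (f := fun i (_ : i ∈ Set.Iio m) => MeasurableSpace.comap (X i) inferInstance)
      i (lt_of_lt_of_le hi hnm)
  le' n := iSup₂_le fun i _ => (hX i).comap_le

lemma comap_le_filtOf {E : Type*} [MeasurableSpace E] (X : ℕ → Ω → E)
    (hX : ∀ k, Measurable (X k)) (k : ℕ) :
    MeasurableSpace.comap (X k) inferInstance ≤ filtOf X hX (k + 1) :=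
  le_iSup₂ (f := fun i (_ : i ∈ Set.Iio (k + 1)) => MeasurableSpace.comap (X i) inferInstance)
    k (Nat.lt_succ_self k)

lemma integrable_of_bdd {μ : MeasureTheory.Measure Ω} [MeasureTheory.IsFiniteMeasure μ]
    {f : Ω → ℝ} {C : ℝ}
    (hm : MeasureTheory.AEStronglyMeasurable f μ) (h : ∀ ω, |f ω| ≤ C) :
    MeasureTheory.Integrable f μ :=
  MeasureTheory.Integrable.mono' (MeasureTheory.integrable_const C) hm
    (Filter.Eventually.of_forall (fun ω => by rw [Real.norm_eq_abs]; exact h ω))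

lemma measurable_finset_sup' {ι : Type*} {m : MeasurableSpace Ω} (t : Finset ι)
    (ht : t.Nonempty) (f : ι → Ω → ℝ) (hf : ∀ i, Measurable[m] (f i)) :
    Measurable[m] (fun ω => t.sup' ht (fun i => f i ω)) := by
  induction ht using Finset.Nonempty.cons_induction with
  | singleton a => simpa using hf a
  | cons a t hat ht ih =>
    simp only [Finset.sup'_cons ht]
    exact (hf a).max ih

end Prob

section Prob2

variable {S A : Type*} [Fintype S] [Fintype A] [Nonempty S] [Nonempty A]
  [DecidableEq S] [DecidableEq A]
  [MeasurableSpace S] [MeasurableSingletonClass S]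
  [MeasurableSpace A] [MeasurableSingletonClass A]
  {Ω : Type*} {m0 : MeasurableSpace Ω}

lemma measurable_maxQ {m : MeasurableSpace Ω} (f : Ω → S → A → ℝ)
    (hf : ∀ s a, Measurable[m] (fun ω => f ω s a)) (s' : S) :
    Measurable[m] (fun ω => maxQ (f ω) s') :=
  measurable_finset_sup' _ _ _ (fun a => hf s' a)

lemma measurable_bellmanT {m : MeasurableSpace Ω} (P r : S → A → S → ℝ) (γ : ℝ)
    (f : Ω → S → A → ℝ) (hf : ∀ s a, Measurable[m] (fun ω => f ω s a)) (s : S) (a : A) :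
    Measurable[m] (fun ω => bellmanT P r γ (f ω) s a) := by
  unfold bellmanT
  refine Finset.measurable_sum _ fun s' _ => ?_
  exact ((((measurable_maxQ f hf s').const_mul γ).const_add (r s a s')).const_mul
    (P s a s'))

/-- composing an adapted family with the fresh sample `X k` is measurable for the next
σ-algebra. -/
lemma measurable_comp_X (X : ℕ → Ω → S × A × S) (hX : ∀ k, Measurable (X k)) (k : ℕ)
    (H : Ω → S × A × S → ℝ)
    (hH : ∀ x, Measurable[filtOf X hX k] (fun ω => H ω x)) :
    Measurable[filtOf X hX (k + 1)] (fun ω => H ω (X k ω)) := by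
  have hrw : (fun ω => H ω (X k ω)) =
      fun ω => ∑ x : S × A × S, if X k ω = x then H ω x else 0 := by
    funext ω
    rw [Finset.sum_ite_eq (Finset.univ : Finset (S × A × S)) (X k ω) (fun x => H ω x)]
    simp
  rw [hrw]
  refine Finset.measurable_sum _ fun x _ => ?_
  have hset : MeasurableSet[filtOf X hX (k + 1)] {ω | X k ω = x} := by
    refine comap_le_filtOf X hX k _ ?_
    exact ⟨{x}, measurableSet_singleton x, by ext ω; simp⟩
  exact Measurable.ite hset ((hH x).mono ((filtOf X hX).mono (Nat.le_succ k)) le_rfl)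
    measurable_const

end Prob2

section Prob3

open MeasureTheory

variable {S A : Type*} [Fintype S] [Fintype A] [Nonempty S] [Nonempty A]
  [DecidableEq S] [DecidableEq A]
  [MeasurableSpace S] [MeasurableSingletonClass S]
  [MeasurableSpace A] [MeasurableSingletonClass A]
  {Ω : Type*} {m0 : MeasurableSpace Ω}

lemma condexp_comp_zero (μ : Measure Ω) [IsProbabilityMeasure μ]
    (X : ℕ → Ω → S × A × S) (hX : ∀ k, Measurable (X k)) (k : ℕ)
    (hindep : ProbabilityTheory.Indep (MeasurableSpace.comap (X k) inferInstance)
      (filtOf X hX k) μ)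
    (p : S × A × S → ℝ) (hp0 : ∀ x, 0 ≤ p x)
    (hp : ∀ x, μ {ω | X k ω = x} = ENNReal.ofReal (p x))
    (H : Ω → S × A × S → ℝ)
    (hH : ∀ x, Measurable[filtOf X hX k] (fun ω => H ω x))
    (C : ℝ) (hC0 : 0 ≤ C) (hHb : ∀ ω x, |H ω x| ≤ C)
    (hzero : ∀ ω, ∑ x : S × A × S, p x * H ω x = 0) :
    μ[(fun ω => H ω (X k ω)) | filtOf X hX k] =ᵐ[μ] 0 := by
  have hmle : filtOf X hX k ≤ m0 := (filtOf X hX).le k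
  have hsetm0 : ∀ x : S × A × S, MeasurableSet {ω | X k ω = x} := by
    intro x
    have : {ω | X k ω = x} = (X k) ⁻¹' {x} := by ext ω; simp
    rw [this]
    exact (hX k) (measurableSet_singleton x)
  have hindmeas : ∀ x : S × A × S, Measurable (fun ω => if X k ω = x then (1:ℝ) else 0) :=
    fun x => Measurable.ite (hsetm0 x) measurable_const measurable_const
  have hrw : (fun ω => H ω (X k ω)) =
      ∑ x : S × A × S, (fun ω => H ω x) * (fun ω => if X k ω = x then (1:ℝ) else 0) := by
    funext ω
    rw [Finset.sum_apply]
    simp only [Pi.mul_apply, mul_ite, mul_one, mul_zero]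
    rw [Finset.sum_ite_eq (Finset.univ : Finset (S × A × S)) (X k ω) (fun x => H ω x)]
    simp
  have hint : ∀ x : S × A × S,
      Integrable ((fun ω => H ω x) * (fun ω => if X k ω = x then (1:ℝ) else 0)) μ := by
    intro x
    refine integrable_of_bdd (C := C) ?_ ?_
    · exact (((hH x).mono hmle le_rfl).mul (hindmeas x)).aestronglyMeasurable
    · intro ω
      simp only [Pi.mul_apply]
      rw [abs_mul]
      have h1 : |if X k ω = x then (1:ℝ) else 0| ≤ 1 := by split <;> simp
      have h2 := mul_le_mul (hHb ω x) h1 (abs_nonneg _) hC0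
      simpa using h2
  have hgint : ∀ x : S × A × S, Integrable (fun ω => if X k ω = x then (1:ℝ) else 0) μ := by
    intro x
    refine integrable_of_bdd (C := 1) (hindmeas x).aestronglyMeasurable ?_
    intro ω
    split <;> simp
  have hterm : ∀ x : S × A × S,
      μ[(fun ω => H ω x) * (fun ω => if X k ω = x then (1:ℝ) else 0) | filtOf X hX k]
        =ᵐ[μ] fun ω => H ω x * p x := by
    intro x
    have hmul := condExp_mul_of_stronglyMeasurable_left (μ := μ)
      (((hH x).stronglyMeasurable : StronglyMeasurable[filtOf X hX k] fun ω => H ω x))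
      (hint x) (hgint x)
    have hsm1 : StronglyMeasurable[MeasurableSpace.comap (X k) inferInstance]
        (fun ω => if X k ω = x then (1:ℝ) else 0) := by
      have hset : MeasurableSet[MeasurableSpace.comap (X k) inferInstance] {ω | X k ω = x} :=
        ⟨{x}, measurableSet_singleton x, by ext ω; simp⟩
      exact (Measurable.ite hset measurable_const measurable_const).stronglyMeasurable
    have hindc := MeasureTheory.condExp_indep_eq (μ := μ) (hX k).comap_le hmle hsm1 hindep
    have hInt : ∫ ω, (if X k ω = x then (1:ℝ) else 0) ∂μ = p x := by
      have h1 : (fun ω => if X k ω = x then (1:ℝ) else 0) =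
          Set.indicator ((X k) ⁻¹' {x}) (fun _ => (1:ℝ)) := by
        funext ω
        classical
        rw [Set.indicator_apply]
        simp [Set.mem_preimage]
      rw [h1, integral_indicator_const (1:ℝ) ((hX k) (measurableSet_singleton x)),
        smul_eq_mul, mul_one]
      have h2 : (X k) ⁻¹' {x} = {ω | X k ω = x} := by ext ω; simp
      rw [h2, measureReal_def, hp x, ENNReal.toReal_ofReal (hp0 x)]
    refine hmul.trans ?_
    filter_upwards [hindc] with ω hω
    simp only [Pi.mul_apply]
    rw [hω, hInt]
  calc μ[(fun ω => H ω (X k ω)) | filtOf X hX k]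
      =ᵐ[μ] ∑ x : S × A × S,
        μ[(fun ω => H ω x) * (fun ω => if X k ω = x then (1:ℝ) else 0) | filtOf X hX k] := by
        rw [hrw]
        exact condExp_finsetSum (fun x _ => hint x) _
    _ =ᵐ[μ] fun ω => ∑ x : S × A × S, H ω x * p x := by
        have h := (ae_all_iff).2 hterm
        filter_upwards [h] with ω hω
        rw [Finset.sum_apply]
        exact Finset.sum_congr rfl fun x _ => hω x
    _ = 0 := by
        funext ω
        have := hzero ω
        simp only [Pi.zero_apply]
        rw [← this]
        exact Finset.sum_congr rfl fun x _ => mul_comm _ _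

end Prob3

section Prob4

open MeasureTheory

variable {Ω : Type*} {m0 : MeasurableSpace Ω}

lemma ae_exists_lim_sum_noise (μ : Measure Ω) [IsProbabilityMeasure μ]
    (ℱ : Filtration ℕ m0) (ξ : ℕ → Ω → ℝ) (C : ℝ) (hC0 : 0 ≤ C)
    (hbdd : ∀ k ω, |ξ k ω| ≤ C)
    (hadp : ∀ k, Measurable[ℱ (k + 1)] (ξ k))
    (hce : ∀ k, μ[ξ k | ℱ k] =ᵐ[μ] 0)
    (α : ℕ → ℝ) (hαsq : Summable fun k => α k ^ 2) :
    ∀ᵐ ω ∂μ, ∃ l, Filter.Tendsto (fun n => ∑ k ∈ Finset.range n, α k * ξ k ω)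
      Filter.atTop (nhds l) := by
  set M : ℕ → Ω → ℝ := fun n ω => ∑ k ∈ Finset.range n, α k * ξ k ω with hMdef
  have hSM : ∀ n, Measurable[ℱ n] (M n) := by
    intro n
    refine Finset.measurable_sum _ fun k hk => ?_
    have hkn : k + 1 ≤ n := Finset.mem_range.1 hk
    exact ((hadp k).mono (ℱ.mono hkn) le_rfl).const_mul (α k)
  set B : ℕ → ℝ := fun n => ∑ k ∈ Finset.range n, |α k| * C with hBdef
  have hMbd : ∀ n ω, |M n ω| ≤ B n := by
    intro n ω
    calc |M n ω| ≤ ∑ k ∈ Finset.range n, |α k * ξ k ω| := Finset.abs_sum_le_sum_abs _ _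
      _ ≤ B n := Finset.sum_le_sum fun k _ => by
          rw [abs_mul]
          exact mul_le_mul_of_nonneg_left (hbdd k ω) (abs_nonneg _)
  have hMint : ∀ n, Integrable (M n) μ := fun n =>
    integrable_of_bdd ((hSM n).mono (ℱ.le n) le_rfl).aestronglyMeasurable (hMbd n)
  have hξint : ∀ k, Integrable (ξ k) μ := fun k =>
    integrable_of_bdd ((hadp k).mono (ℱ.le (k + 1)) le_rfl).aestronglyMeasurable
      (fun ω => hbdd k ω)
  have hintM2 : ∀ n, Integrable (fun ω => (M n ω) ^ 2) μ := by
    intro n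
    refine integrable_of_bdd (C := (B n) ^ 2)
      ((((hSM n).mono (ℱ.le n) le_rfl).pow_const 2).aestronglyMeasurable) ?_
    intro ω
    rw [abs_pow]
    exact pow_le_pow_left₀ (abs_nonneg _) (hMbd n ω) 2
  have hintMξ : ∀ n, Integrable (fun ω => M n ω * ξ n ω) μ := by
    intro n
    refine integrable_of_bdd (C := B n * C)
      ((((hSM n).mono (ℱ.le n) le_rfl).mul
        ((hadp n).mono (ℱ.le (n + 1)) le_rfl)).aestronglyMeasurable) ?_
    intro ω
    rw [abs_mul]
    exact mul_le_mul (hMbd n ω) (hbdd n ω) (abs_nonneg _)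
      (le_trans (abs_nonneg _) (hMbd n ω))
  have hintξ2 : ∀ n, Integrable (fun ω => (ξ n ω) ^ 2) μ := by
    intro n
    refine integrable_of_bdd (C := C ^ 2)
      ((((hadp n).mono (ℱ.le (n + 1)) le_rfl).pow_const 2).aestronglyMeasurable) ?_
    intro ω
    rw [abs_pow]
    exact pow_le_pow_left₀ (abs_nonneg _) (hbdd n ω) 2
  -- martingale property
  have hmart : Martingale M ℱ μ := by
    refine martingale_nat (fun n => (hSM n).stronglyMeasurable) hMint ?_
    intro n
    have hsucc : M (n + 1) = M n + fun ω => α n * ξ n ω := by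
      funext ω
      simp [hMdef, Finset.sum_range_succ]
    rw [hsucc]
    have h1 : μ[M n + (fun ω => α n * ξ n ω) | ℱ n] =ᵐ[μ]
        μ[M n | ℱ n] + μ[(fun ω => α n * ξ n ω) | ℱ n] :=
      condExp_add (hMint n) ((hξint n).const_mul (α n)) _
    have h2 : μ[M n | ℱ n] = M n :=
      condExp_of_stronglyMeasurable (ℱ.le n) (hSM n).stronglyMeasurable (hMint n)
    have h3 : μ[(fun ω => α n * ξ n ω) | ℱ n] =ᵐ[μ] 0 := by
      have hs : μ[α n • ξ n | ℱ n] =ᵐ[μ] α n • μ[ξ n | ℱ n] := condExp_smul (α n) (ξ n) _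
      refine EventuallyEq.trans (EventuallyEq.of_eq ?_) (hs.trans ?_)
      · rfl
      · filter_upwards [hce n] with ω hω
        simp only [Pi.smul_apply, smul_eq_mul, hω, Pi.zero_apply, mul_zero]
    refine (h1.trans ?_).symm
    filter_upwards [h3] with ω hω
    simp only [Pi.add_apply, h2, hω, Pi.zero_apply, add_zero]
  -- second moment bound
  have hsq : ∀ n, ∫ ω, (M n ω) ^ 2 ∂μ ≤ C ^ 2 * ∑ k ∈ Finset.range n, α k ^ 2 := by
    intro n
    induction n with
    | zero => simp [hMdef]
    | succ n ih =>
      have hMker : (fun ω => (M (n + 1) ω) ^ 2) = fun ω =>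
          ((M n ω) ^ 2 + 2 * α n * (M n ω * ξ n ω)) + α n ^ 2 * (ξ n ω) ^ 2 := by
        funext ω
        simp only [hMdef, Finset.sum_range_succ]
        ring
      have hMξ0 : ∫ ω, M n ω * ξ n ω ∂μ = 0 := by
        have hmulce := condExp_mul_of_stronglyMeasurable_left (μ := μ)
          ((hSM n).stronglyMeasurable) (hintMξ n) (hξint n)
        have h0 : μ[(fun ω => M n ω * ξ n ω) | ℱ n] =ᵐ[μ] 0 := by
          refine EventuallyEq.trans (EventuallyEq.of_eq rfl) (hmulce.trans ?_)
          filter_upwards [hce n] with ω hω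
          simp only [Pi.mul_apply, hω, Pi.zero_apply, mul_zero]
        calc ∫ ω, M n ω * ξ n ω ∂μ
            = ∫ ω, (μ[(fun ω => M n ω * ξ n ω) | ℱ n]) ω ∂μ :=
              (integral_condExp (ℱ.le n)).symm
          _ = 0 := by
              rw [integral_congr_ae h0]
              simp
      have hξ2C : ∫ ω, (ξ n ω) ^ 2 ∂μ ≤ C ^ 2 := by
        have h1 : ∫ ω, (ξ n ω) ^ 2 ∂μ ≤ ∫ _ω, C ^ 2 ∂μ :=
          integral_mono (hintξ2 n) (integrable_const (C ^ 2)) (fun ω => by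
            rw [← sq_abs]
            exact pow_le_pow_left₀ (abs_nonneg _) (hbdd n ω) 2)
        simpa using h1
      have hsplit : ∫ ω, (M (n + 1) ω) ^ 2 ∂μ =
          (∫ ω, (M n ω) ^ 2 ∂μ + 2 * α n * ∫ ω, M n ω * ξ n ω ∂μ) +
            α n ^ 2 * ∫ ω, (ξ n ω) ^ 2 ∂μ := by
        have hI1 : Integrable (fun ω => (M n ω) ^ 2 + 2 * α n * (M n ω * ξ n ω)) μ :=
          (hintM2 n).add ((hintMξ n).const_mul (2 * α n))
        have hI2 : Integrable (fun ω => α n ^ 2 * (ξ n ω) ^ 2) μ :=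
          (hintξ2 n).const_mul _
        rw [hMker, integral_add hI1 hI2, integral_add (hintM2 n)
          ((hintMξ n).const_mul (2 * α n)), integral_const_mul, integral_const_mul]
      rw [hsplit, hMξ0, Finset.sum_range_succ]
      have h1 : α n ^ 2 * ∫ ω, (ξ n ω) ^ 2 ∂μ ≤ α n ^ 2 * C ^ 2 :=
        mul_le_mul_of_nonneg_left hξ2C (sq_nonneg _)
      nlinarith [sq_nonneg (α n), sq_nonneg C]
  -- L¹ bound
  set T : ℝ := ∑' k, α k ^ 2 with hTdef
  have hTub : ∀ n, ∑ k ∈ Finset.range n, α k ^ 2 ≤ T := fun n =>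
    hαsq.sum_le_tsum (Finset.range n) (fun k _ => sq_nonneg _)
  have hsnorm : ∀ n, eLpNorm (M n) 1 μ ≤ ENNReal.ofReal ((C ^ 2 * T + 1) / 2) := by
    intro n
    have hptw : ∀ ω, ‖M n ω‖ ≤ ((M n ω) ^ 2 + 1) / 2 := by
      intro ω
      rw [Real.norm_eq_abs]
      nlinarith [sq_nonneg (|M n ω| - 1), sq_abs (M n ω)]
    have hint2 : Integrable (fun ω => ((M n ω) ^ 2 + 1) / 2) μ :=
      ((hintM2 n).add (integrable_const 1)).div_const 2
    have habs : ∫ ω, ‖M n ω‖ ∂μ ≤ (C ^ 2 * T + 1) / 2 := by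
      calc ∫ ω, ‖M n ω‖ ∂μ ≤ ∫ ω, ((M n ω) ^ 2 + 1) / 2 ∂μ :=
            integral_mono (hMint n).norm hint2 hptw
        _ = (∫ ω, (M n ω) ^ 2 ∂μ + 1) / 2 := by
            rw [integral_div, integral_add (hintM2 n) (integrable_const 1)]
            simp
        _ ≤ (C ^ 2 * T + 1) / 2 := by
            have h1 : C ^ 2 * ∑ k ∈ Finset.range n, α k ^ 2 ≤ C ^ 2 * T :=
              mul_le_mul_of_nonneg_left (hTub n) (sq_nonneg _)
            have h2 := hsq n
            linarith
    rw [eLpNorm_one_eq_lintegral_enorm, ← ofReal_integral_norm_eq_lintegral_enorm (hMint n)]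
    exact ENNReal.ofReal_le_ofReal habs
  have hconv := hmart.submartingale.ae_tendsto_limitProcess hsnorm
  filter_upwards [hconv] with ω hω
  exact ⟨_, hω⟩

end Prob4

lemma sum_ite_triple {S A : Type*} [Fintype S] [Fintype A] [DecidableEq S] [DecidableEq A]
    (s : S) (a : A) (F : S × A × S → ℝ) :
    ∑ x : S × A × S, (if s = x.1 ∧ a = x.2.1 then F x else 0) = ∑ s' : S, F (s, a, s') := by
  rw [Fintype.sum_prod_type]
  have h1 : ∀ s₀ : S, (∑ y : A × S, if s = s₀ ∧ a = y.1 then F (s₀, y) else 0) =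
      if s = s₀ then ∑ y : A × S, (if a = y.1 then F (s₀, y) else 0) else 0 := by
    intro s₀
    by_cases h : s = s₀ <;> simp [h]
  rw [Finset.sum_congr rfl fun s₀ _ => h1 s₀, Finset.sum_ite_eq Finset.univ s
    (fun s₀ => ∑ y : A × S, (if a = y.1 then F (s₀, y) else 0))]
  simp only [Finset.mem_univ, if_true]
  rw [Fintype.sum_prod_type]
  have h2 : ∀ a₀ : A, (∑ s₁ : S, if a = a₀ then F (s, a₀, s₁) else 0) =
      if a = a₀ then ∑ s₁ : S, F (s, a₀, s₁) else 0 := by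
    intro a₀
    by_cases h : a = a₀ <;> simp [h]
  rw [Finset.sum_congr rfl fun a₀ _ => h2 a₀, Finset.sum_ite_eq Finset.univ a
    (fun a₀ => ∑ s₁ : S, F (s, a₀, s₁))]
  simp

end AGT2

open AGT2 in
theorem agt2_ql_convergence
    {S A : Type*} [Fintype S] [Fintype A] [Nonempty S] [Nonempty A]
    [DecidableEq S] [DecidableEq A]
    [MeasurableSpace S] [MeasurableSingletonClass S]
    [MeasurableSpace A] [MeasurableSingletonClass A]
    (P r : S → A → S → ℝ) (γ : ℝ) (hγ0 : 0 ≤ γ) (hγ1 : γ < 1)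
    (hP0 : ∀ s a s', 0 ≤ P s a s') (hP1 : ∀ s a, ∑ s', P s a s' = 1)
    (Qstar : S → A → ℝ) (hQstar : bellmanT P r γ Qstar = Qstar)
    (β : ℝ) (hβ : 0 < β)
    (α : ℕ → ℝ) (hα01 : ∀ k, 0 ≤ α k ∧ α k ≤ 1)
    (hαdiv : Tendsto (fun n => ∑ k ∈ Finset.range n, α k) atTop atTop)
    (hαsq : Summable fun k => (α k) ^ 2)
    (d : S → A → ℝ) (hd : ∀ s a, 0 < d s a)
    {Ω : Type*} [MeasurableSpace Ω] (μ : Measure Ω) [IsProbabilityMeasure μ]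
    (X : ℕ → Ω → S × A × S)
    (hXmeas : ∀ k, Measurable (X k))
    (hXindep : iIndepFun X μ)
    (hXlaw : ∀ k (s : S) (a : A) (s' : S),
      μ {ω | X k ω = (s, a, s')} = ENNReal.ofReal (d s a * P s a s'))
    (QA QB : ℕ → Ω → S → A → ℝ) (QA0 QB0 : S → A → ℝ)
    (hQA0 : ∀ ω, QA 0 ω = QA0) (hQB0 : ∀ ω, QB 0 ω = QB0)
    (hQArec : ∀ k ω s a, QA (k + 1) ω s a = QA k ω s a +
      α k * (if s = (X k ω).1 ∧ a = (X k ω).2.1 then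
          r (X k ω).1 (X k ω).2.1 (X k ω).2.2 + γ * maxQ (QB k ω) (X k ω).2.2 -
            QA k ω (X k ω).1 (X k ω).2.1
        else 0))
    (hQBrec : ∀ k ω s a, QB (k + 1) ω s a = QB k ω s a +
      α k * β * (if s = (X k ω).1 ∧ a = (X k ω).2.1 then
          QA k ω (X k ω).1 (X k ω).2.1 - QB k ω (X k ω).1 (X k ω).2.1
        else 0)) :
    ∀ᵐ ω ∂μ, ∀ s a,
      Tendsto (fun k => QA k ω s a) atTop (nhds (Qstar s a)) ∧
      Tendsto (fun k => QB k ω s a) atTop (nhds (Qstar s a)) := by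
  have hα0 : ∀ k, 0 ≤ α k := fun k => (hα01 k).1
  -- step sizes tend to zero
  have hαlim : Tendsto α atTop (nhds 0) := by
    have h := (Real.continuous_sqrt.tendsto 0).comp hαsq.tendsto_atTop_zero
    rw [Real.sqrt_zero] at h
    exact h.congr fun k => Real.sqrt_sq (hα0 k)
  have hev : ∀ᶠ k in atTop, α k * β ≤ 1 := by
    filter_upwards [hαlim.eventually_lt_const (show (0:ℝ) < 1 / β by positivity)] with k hk
    rw [← le_div_iff₀ hβ]
    exact hk.le
  obtain ⟨K₀, hK₀⟩ := eventually_atTop.1 hev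
  -- total mass one
  have hp0 : ∀ x : S × A × S, 0 ≤ d x.1 x.2.1 * P x.1 x.2.1 x.2.2 :=
    fun x => mul_nonneg (hd _ _).le (hP0 _ _ _)
  have hmeasset : ∀ (k : ℕ) (x : S × A × S), MeasurableSet {ω | X k ω = x} := by
    intro k x
    have : {ω | X k ω = x} = (X k) ⁻¹' {x} := by ext ω; simp
    rw [this]
    exact (hXmeas k) (measurableSet_singleton x)
  have hsum1 : ∑ x : S × A × S, d x.1 x.2.1 * P x.1 x.2.1 x.2.2 = 1 := by
    have huniv : ⋃ x ∈ (Finset.univ : Finset (S × A × S)), {ω | X 0 ω = x} = Set.univ := by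
      ext ω
      simp only [Set.mem_iUnion, Finset.mem_univ, Set.mem_setOf_eq, Set.mem_univ, iff_true]
      exact ⟨X 0 ω, trivial, rfl⟩
    have hpd : ((Finset.univ : Finset (S × A × S)) : Set (S × A × S)).PairwiseDisjoint
        (fun x => {ω | X 0 ω = x}) := by
      intro x _ y _ hxy
      refine Set.disjoint_left.2 fun ω h1 h2 => hxy ?_
      rw [← h1, ← h2]
    have hμsum : ∑ x : S × A × S, μ {ω | X 0 ω = x} = 1 := by
      rw [← measure_biUnion_finset hpd (fun x _ => hmeasset 0 x), huniv, measure_univ]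
    have h2 : ∑ x : S × A × S, ENNReal.ofReal (d x.1 x.2.1 * P x.1 x.2.1 x.2.2) = 1 := by
      rw [← hμsum]
      exact Finset.sum_congr rfl fun x _ => (hXlaw 0 x.1 x.2.1 x.2.2).symm
    have h3 := congrArg ENNReal.toReal h2
    rw [ENNReal.toReal_sum (fun x _ => ENNReal.ofReal_ne_top)] at h3
    simpa [ENNReal.toReal_ofReal (hp0 _)] using h3
  -- independence of fresh samples from the past
  have hIndep : ∀ k, ProbabilityTheory.Indep
      (MeasurableSpace.comap (X k) inferInstance) (filtOf X hXmeas k) μ := by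
    intro k
    have h1 := hXindep.iIndep
    have hdisj : Disjoint ({k} : Set ℕ) (Set.Iio k) := by
      rw [Set.disjoint_singleton_left]
      simp
    have h2 := ProbabilityTheory.indep_iSup_of_disjoint
      (fun i => (hXmeas i).comap_le) h1 hdisj
    have h3 : (⨆ i ∈ ({k} : Set ℕ), MeasurableSpace.comap (X i) inferInstance) =
        MeasurableSpace.comap (X k) inferInstance := by simp
    rw [h3] at h2
    exact h2
  -- adaptedness
  have AD : ∀ k, (∀ s a, Measurable[filtOf X hXmeas k] fun ω => QA k ω s a) ∧
      (∀ s a, Measurable[filtOf X hXmeas k] fun ω => QB k ω s a) := by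
    intro k
    induction k with
    | zero =>
      constructor <;> intro s a
      · have h : (fun ω => QA 0 ω s a) = fun _ => QA0 s a := funext fun ω => by rw [hQA0 ω]
        rw [h]; exact measurable_const
      · have h : (fun ω => QB 0 ω s a) = fun _ => QB0 s a := funext fun ω => by rw [hQB0 ω]
        rw [h]; exact measurable_const
    | succ k ih =>
      obtain ⟨ihA, ihB⟩ := ih
      constructor
      · intro s a
        have hH : ∀ x : S × A × S, Measurable[filtOf X hXmeas k] (fun ω =>
            if s = x.1 ∧ a = x.2.1 then r x.1 x.2.1 x.2.2 + γ * maxQ (QB k ω) x.2.2 -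
              QA k ω x.1 x.2.1 else 0) := by
          intro x
          by_cases h : s = x.1 ∧ a = x.2.1
          · simp only [if_pos h]
            exact (((measurable_maxQ (fun ω => QB k ω) ihB x.2.2).const_mul γ).const_add
              (r x.1 x.2.1 x.2.2)).sub (ihA x.1 x.2.1)
          · simp only [if_neg h]
            exact measurable_const
        have hcomp := measurable_comp_X X hXmeas k _ hH
        have hrw : (fun ω => QA (k + 1) ω s a) = fun ω => QA k ω s a + α k *
            (if s = (X k ω).1 ∧ a = (X k ω).2.1 then
              r (X k ω).1 (X k ω).2.1 (X k ω).2.2 + γ * maxQ (QB k ω) (X k ω).2.2 -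
                QA k ω (X k ω).1 (X k ω).2.1 else 0) := funext fun ω => hQArec k ω s a
        rw [hrw]
        exact ((ihA s a).mono ((filtOf X hXmeas).mono k.le_succ) le_rfl).add
          (hcomp.const_mul (α k))
      · intro s a
        have hH : ∀ x : S × A × S, Measurable[filtOf X hXmeas k] (fun ω =>
            if s = x.1 ∧ a = x.2.1 then QA k ω x.1 x.2.1 - QB k ω x.1 x.2.1 else 0) := by
          intro x
          by_cases h : s = x.1 ∧ a = x.2.1
          · simp only [if_pos h]
            exact (ihA x.1 x.2.1).sub (ihB x.1 x.2.1)
          · simp only [if_neg h]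
            exact measurable_const
        have hcomp := measurable_comp_X X hXmeas k _ hH
        have hrw : (fun ω => QB (k + 1) ω s a) = fun ω => QB k ω s a + α k * β *
            (if s = (X k ω).1 ∧ a = (X k ω).2.1 then
              QA k ω (X k ω).1 (X k ω).2.1 - QB k ω (X k ω).1 (X k ω).2.1 else 0) :=
          funext fun ω => hQBrec k ω s a
        rw [hrw]
        exact ((ihB s a).mono ((filtOf X hXmeas).mono k.le_succ) le_rfl).add
          (hcomp.const_mul (α k * β))
  -- uniform bound on the iterates
  set Rm : ℝ := (Finset.univ : Finset (S × A × S)).sup' Finset.univ_nonempty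
    (fun t => |r t.1 t.2.1 t.2.2|) with hRmdef
  have hRmr : ∀ s a s', |r s a s'| ≤ Rm := fun s a s' =>
    Finset.le_sup' (f := fun t : S × A × S => |r t.1 t.2.1 t.2.2|) (Finset.mem_univ (s, a, s'))
  have hRm0 : 0 ≤ Rm := le_trans (abs_nonneg _)
    (hRmr Classical.ofNonempty Classical.ofNonempty Classical.ofNonempty)
  set R' : ℝ := max (Rm / (1 - γ)) 0 with hR'def
  have hR'0 : 0 ≤ R' := le_max_right _ _
  have hrR' : ∀ s a s', |r s a s'| ≤ (1 - γ) * R' := by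
    intro s a s'
    refine le_trans (hRmr s a s') ?_
    have h1γ : 0 < 1 - γ := by linarith
    calc Rm = (1 - γ) * (Rm / (1 - γ)) := by field_simp
      _ ≤ (1 - γ) * R' := mul_le_mul_of_nonneg_left (le_max_left _ _) h1γ.le
  set Mbd : ℝ := (max (max (supNorm QA0) (supNorm QB0)) R') *
    ∏ j ∈ Finset.range K₀, (1 + 2 * (α j * β)) with hMbddef
  have hQbnd : ∀ ω k, max (supNorm (QA k ω)) (supNorm (QB k ω)) ≤ Mbd := by
    intro ω k
    have h := qbounded P r γ hγ0 hγ1 β hβ α hα01 K₀ hK₀ R' hR'0 hrR'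
      (fun k => X k ω) (fun k => QA k ω) (fun k => QB k ω)
      (fun k s a => hQArec k ω s a) (fun k s a => hQBrec k ω s a) k
    rwa [hQA0 ω, hQB0 ω] at h
  -- noise families
  have hξ1 : ∀ s a, ∀ᵐ ω ∂μ, ∃ l, Tendsto (fun n => ∑ k ∈ Finset.range n,
      α k * ((if s = (X k ω).1 ∧ a = (X k ω).2.1 then (1:ℝ) else 0) - d s a))
      atTop (nhds l) := by
    intro s a
    refine ae_exists_lim_sum_noise μ (filtOf X hXmeas)
      (fun k ω => (if s = (X k ω).1 ∧ a = (X k ω).2.1 then (1:ℝ) else 0) - d s a)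
      (1 + d s a) (by nlinarith [hd s a]) ?_ ?_ ?_ α hαsq
    · intro k ω
      have h1 : |if s = (X k ω).1 ∧ a = (X k ω).2.1 then (1:ℝ) else 0| ≤ 1 := by
        split <;> simp
      calc |(if s = (X k ω).1 ∧ a = (X k ω).2.1 then (1:ℝ) else 0) - d s a|
          ≤ |if s = (X k ω).1 ∧ a = (X k ω).2.1 then (1:ℝ) else 0| + |d s a| := abs_sub _ _
        _ ≤ 1 + d s a := add_le_add h1 (le_of_eq (abs_of_pos (hd s a)))
    · intro k
      exact measurable_comp_X X hXmeas k
        (fun ω x => (if s = x.1 ∧ a = x.2.1 then (1:ℝ) else 0) - d s a)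
        (fun x => measurable_const)
    · intro k
      refine condexp_comp_zero μ X hXmeas k (hIndep k)
        (fun x => d x.1 x.2.1 * P x.1 x.2.1 x.2.2) hp0
        (fun x => hXlaw k x.1 x.2.1 x.2.2)
        (fun ω x => (if s = x.1 ∧ a = x.2.1 then (1:ℝ) else 0) - d s a)
        (fun x => measurable_const) (1 + d s a) (by nlinarith [hd s a]) ?_ ?_
      · intro ω x
        have h1 : |if s = x.1 ∧ a = x.2.1 then (1:ℝ) else 0| ≤ 1 := by split <;> simp
        calc |(if s = x.1 ∧ a = x.2.1 then (1:ℝ) else 0) - d s a|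
            ≤ |if s = x.1 ∧ a = x.2.1 then (1:ℝ) else 0| + |d s a| := abs_sub _ _
          _ ≤ 1 + d s a := add_le_add h1 (le_of_eq (abs_of_pos (hd s a)))
      · intro ω
        have hsplit : ∀ x : S × A × S, (d x.1 x.2.1 * P x.1 x.2.1 x.2.2) *
            ((if s = x.1 ∧ a = x.2.1 then (1:ℝ) else 0) - d s a) =
            (if s = x.1 ∧ a = x.2.1 then d x.1 x.2.1 * P x.1 x.2.1 x.2.2 else 0) -
              (d x.1 x.2.1 * P x.1 x.2.1 x.2.2) * d s a := by
          intro x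
          split <;> ring
        rw [Finset.sum_congr rfl fun x _ => hsplit x, Finset.sum_sub_distrib,
          sum_ite_triple s a (fun x => d x.1 x.2.1 * P x.1 x.2.1 x.2.2),
          ← Finset.sum_mul, hsum1, one_mul]
        simp only
        rw [← Finset.mul_sum, hP1 s a, mul_one, sub_self]
  have hMbd0 : 0 ≤ Mbd := by
    refine mul_nonneg (le_trans hR'0 (le_max_right _ _))
      (Finset.prod_nonneg fun j _ => by nlinarith [(hα01 j).1, hβ.le])
  have hQBb : ∀ k ω, supNorm (QB k ω) ≤ Mbd := fun k ω =>
    le_trans (le_max_right _ _) (hQbnd ω k)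
  set C₂ : ℝ := 2 * (Rm + γ * Mbd) + 1 with hC₂def
  have hγM0 : 0 ≤ γ * Mbd := mul_nonneg hγ0 hMbd0
  have hC₂0 : 0 ≤ C₂ := by rw [hC₂def]; linarith
  have hξ2 : ∀ s a, ∀ᵐ ω ∂μ, ∃ l, Tendsto (fun n => ∑ k ∈ Finset.range n,
      α k * ((if s = (X k ω).1 ∧ a = (X k ω).2.1 then (1:ℝ) else 0) *
        (r s a (X k ω).2.2 + γ * maxQ (QB k ω) (X k ω).2.2 -
          bellmanT P r γ (QB k ω) s a))) atTop (nhds l) := by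
    intro s a
    have hζb : ∀ (k : ℕ) (ω : Ω) (x' : S),
        |r s a x' + γ * maxQ (QB k ω) x' - bellmanT P r γ (QB k ω) s a| ≤ C₂ := by
      intro k ω x'
      have h1 : |r s a x'| ≤ Rm := hRmr s a x'
      have h2 : |γ * maxQ (QB k ω) x'| ≤ γ * Mbd := by
        rw [abs_mul, abs_of_nonneg hγ0]
        exact mul_le_mul_of_nonneg_left (le_trans (abs_maxQ_le _ _) (hQBb k ω)) hγ0
      have h3 : |bellmanT P r γ (QB k ω) s a| ≤ Rm + γ * Mbd := by
        refine le_trans (bellman_abs_le P r γ hγ0 hP0 hP1 hRmr (QB k ω) s a) ?_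
        have := mul_le_mul_of_nonneg_left (hQBb k ω) hγ0
        linarith
      calc |r s a x' + γ * maxQ (QB k ω) x' - bellmanT P r γ (QB k ω) s a|
          ≤ |r s a x' + γ * maxQ (QB k ω) x'| + |bellmanT P r γ (QB k ω) s a| := abs_sub _ _
        _ ≤ (Rm + γ * Mbd) + (Rm + γ * Mbd) :=
            add_le_add (le_trans (abs_add_le _ _) (add_le_add h1 h2)) h3
        _ ≤ C₂ := by rw [hC₂def]; linarith
    have hind1 : ∀ (c : Prop) [Decidable c], |if c then (1:ℝ) else 0| ≤ 1 := by
      intro c _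
      split <;> simp
    have hHmeas : ∀ (k : ℕ) (x : S × A × S), Measurable[filtOf X hXmeas k] (fun ω =>
        (if s = x.1 ∧ a = x.2.1 then (1:ℝ) else 0) *
          (r s a x.2.2 + γ * maxQ (QB k ω) x.2.2 - bellmanT P r γ (QB k ω) s a)) := by
      intro k x
      exact ((((measurable_maxQ (fun ω => QB k ω) (AD k).2 x.2.2).const_mul γ).const_add
        (r s a x.2.2)).sub (measurable_bellmanT P r γ _ (AD k).2 s a)).const_mul _
    refine ae_exists_lim_sum_noise μ (filtOf X hXmeas)
      (fun k ω => (if s = (X k ω).1 ∧ a = (X k ω).2.1 then (1:ℝ) else 0) *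
        (r s a (X k ω).2.2 + γ * maxQ (QB k ω) (X k ω).2.2 -
          bellmanT P r γ (QB k ω) s a)) C₂ hC₂0 ?_ ?_ ?_ α hαsq
    · intro k ω
      rw [abs_mul]
      have := mul_le_mul (hind1 (s = (X k ω).1 ∧ a = (X k ω).2.1))
        (hζb k ω (X k ω).2.2) (abs_nonneg _) zero_le_one
      simpa using this
    · intro k
      exact measurable_comp_X X hXmeas k _ (hHmeas k)
    · intro k
      refine condexp_comp_zero μ X hXmeas k (hIndep k)
        (fun x => d x.1 x.2.1 * P x.1 x.2.1 x.2.2) hp0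
        (fun x => hXlaw k x.1 x.2.1 x.2.2)
        (fun ω x => (if s = x.1 ∧ a = x.2.1 then (1:ℝ) else 0) *
          (r s a x.2.2 + γ * maxQ (QB k ω) x.2.2 - bellmanT P r γ (QB k ω) s a))
        (hHmeas k) C₂ hC₂0 ?_ ?_
      · intro ω x
        rw [abs_mul]
        have := mul_le_mul (hind1 (s = x.1 ∧ a = x.2.1)) (hζb k ω x.2.2)
          (abs_nonneg _) zero_le_one
        simpa using this
      · intro ω
        have hsplit : ∀ x : S × A × S, (d x.1 x.2.1 * P x.1 x.2.1 x.2.2) *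
            ((if s = x.1 ∧ a = x.2.1 then (1:ℝ) else 0) *
              (r s a x.2.2 + γ * maxQ (QB k ω) x.2.2 - bellmanT P r γ (QB k ω) s a)) =
            (if s = x.1 ∧ a = x.2.1 then (d x.1 x.2.1 * P x.1 x.2.1 x.2.2) *
              (r s a x.2.2 + γ * maxQ (QB k ω) x.2.2 - bellmanT P r γ (QB k ω) s a)
            else 0) := by
          intro x
          split <;> ring
        rw [Finset.sum_congr rfl fun x _ => hsplit x, sum_ite_triple s a
          (fun x => (d x.1 x.2.1 * P x.1 x.2.1 x.2.2) *
            (r s a x.2.2 + γ * maxQ (QB k ω) x.2.2 - bellmanT P r γ (QB k ω) s a))]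
        have hstep : ∀ s' : S, (d s a * P s a s') *
            (r s a s' + γ * maxQ (QB k ω) s' - bellmanT P r γ (QB k ω) s a) =
            d s a * (P s a s' * (r s a s' + γ * maxQ (QB k ω) s') -
              P s a s' * bellmanT P r γ (QB k ω) s a) := fun s' => by ring
        rw [Finset.sum_congr rfl fun s' _ => hstep s', ← Finset.mul_sum,
          Finset.sum_sub_distrib, ← Finset.sum_mul, hP1 s a, one_mul]
        have hT : (∑ s' : S, P s a s' * (r s a s' + γ * maxQ (QB k ω) s')) =
            bellmanT P r γ (QB k ω) s a := rfl
        rw [hT, sub_self, mul_zero]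
  -- combine the almost-sure events
  have hall : ∀ᵐ ω ∂μ, ∀ s a,
      (∃ l, Tendsto (fun n => ∑ k ∈ Finset.range n,
        α k * ((if s = (X k ω).1 ∧ a = (X k ω).2.1 then (1:ℝ) else 0) - d s a))
        atTop (nhds l)) ∧
      (∃ l, Tendsto (fun n => ∑ k ∈ Finset.range n,
        α k * ((if s = (X k ω).1 ∧ a = (X k ω).2.1 then (1:ℝ) else 0) *
          (r s a (X k ω).2.2 + γ * maxQ (QB k ω) (X k ω).2.2 -
            bellmanT P r γ (QB k ω) s a))) atTop (nhds l)) := by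
    rw [MeasureTheory.ae_all_iff]
    intro s
    rw [MeasureTheory.ae_all_iff]
    intro a
    exact (hξ1 s a).and (hξ2 s a)
  filter_upwards [hall] with ω hω
  have h1 : ∀ s a, Tendsto (fun n => ∑ k ∈ Finset.range n,
      α k * chi (fun j => X j ω) k s a) atTop atTop := by
    intro s a
    obtain ⟨⟨l, hl⟩, _⟩ := hω s a
    have h2 : Tendsto (fun n => d s a * ∑ k ∈ Finset.range n, α k) atTop atTop :=
      hαdiv.const_mul_atTop (hd s a)
    refine (hl.add_atTop h2).congr fun n => ?_
    rw [Finset.mul_sum, ← Finset.sum_add_distrib]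
    refine Finset.sum_congr rfl fun k _ => ?_
    unfold chi
    ring
  have h2 : ∀ s a, CauchySeq (fun n => ∑ k ∈ Finset.range n,
      (α k * chi (fun j => X j ω) k s a) *
        zeta P r γ (fun j => X j ω) (fun j => QB j ω) k s a) := by
    intro s a
    obtain ⟨_, ⟨l, hl⟩⟩ := hω s a
    have heq : (fun n => ∑ k ∈ Finset.range n,
        (α k * chi (fun j => X j ω) k s a) *
          zeta P r γ (fun j => X j ω) (fun j => QB j ω) k s a) =
        (fun n => ∑ k ∈ Finset.range n,
          α k * ((if s = (X k ω).1 ∧ a = (X k ω).2.1 then (1:ℝ) else 0) *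
            (r s a (X k ω).2.2 + γ * maxQ (QB k ω) (X k ω).2.2 -
              bellmanT P r γ (QB k ω) s a))) := by
      funext n
      refine Finset.sum_congr rfl fun k _ => ?_
      unfold chi zeta
      ring
    rw [heq]
    exact hl.cauchySeq
  exact pathwise P r γ hγ0 hγ1 hP0 hP1 Qstar hQstar β hβ α hα01 K₀ hK₀
    (fun j => X j ω) (fun j => QA j ω) (fun j => QB j ω)
    (fun k s a => hQArec k ω s a) (fun k s a => hQBrec k ω s a) h1 h2
end
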